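/- arXiv:2108.13217 — 6 statements merged into one kernel-verified Lean document; each statement's English description precedes it below -/
import Mathlib

section
/- In a preordered semiring S of polynomial growth with power universal element u, if x is catalytically larger than y (i.e., there exists a ∈ S with a·x ≽ a·y), then x is asymptotically larger than y; in fact there exists a fixed k ∈ ℕ such that u^k · x ≽ y. -/
/-- **Catalytic order implies asymptotic order, with a fixed power.**
In a preordered semiring `S` of polynomial growth with power universal element `u`
(i.e. `1 ≤ u` and for every nonzero `x` there is `k` with `x ≤ u ^ k` and `1 ≤ u ^ k * x`),
if `x` is catalytically larger than `y`, witnessed by a nonzero catalyst `a` with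
`a * y ≤ a * x`, then there is a fixed `k ∈ ℕ` such that `y ^ n ≤ u ^ k * x ^ n` for all `n`;
in particular (taking `n = 1`) `y ≤ u ^ k * x`, and `x` is asymptotically larger than `y`
(the constant sequence `k_n = k` satisfies `k_n / n → 0`). -/
theorem catalytic_implies_asymptotic
    {S : Type*} [CommSemiring S] [Preorder S]
    (hadd : ∀ x y z : S, x ≤ y → x + z ≤ y + z)
    (hmul : ∀ x y z : S, x ≤ y → x * z ≤ y * z)
    (u : S) (hu1 : 1 ≤ u)
    (hupu : ∀ x : S, x ≠ 0 → ∃ k : ℕ, x ≤ u ^ k ∧ 1 ≤ u ^ k * x)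
    (x y a : S) (ha : a ≠ 0) (hcat : a * y ≤ a * x) :
    (∃ k : ℕ, ∀ n : ℕ, y ^ n ≤ u ^ k * x ^ n) ∧
      ∃ k : ℕ → ℕ,
        Filter.Tendsto (fun n => (k n : ℝ) / n) Filter.atTop (nhds 0) ∧
        ∀ n : ℕ, y ^ n ≤ u ^ (k n) * x ^ n := by
  obtain ⟨k, hak, h1k⟩ := hupu a ha
  have key : ∀ n : ℕ, a * y ^ n ≤ a * x ^ n := by
    intro n
    induction n with
    | zero => simp
    | succ n ih =>
      calc a * y ^ (n + 1) = (a * y ^ n) * y := by ring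
        _ ≤ (a * x ^ n) * y := hmul _ _ _ ih
        _ = (a * y) * x ^ n := by ring
        _ ≤ (a * x) * x ^ n := hmul _ _ _ hcat
        _ = a * x ^ (n + 1) := by ring
  have main : ∀ n : ℕ, y ^ n ≤ u ^ (2 * k) * x ^ n := by
    intro n
    calc y ^ n = 1 * y ^ n := by ring
      _ ≤ (u ^ k * a) * y ^ n := hmul _ _ _ h1k
      _ = (a * y ^ n) * u ^ k := by ring
      _ ≤ (a * x ^ n) * u ^ k := hmul _ _ _ (key n)
      _ = a * (x ^ n * u ^ k) := by ring
      _ ≤ u ^ k * (x ^ n * u ^ k) := by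
          have := hmul _ _ (x ^ n * u ^ k) hak
          simpa [mul_comm] using this
      _ = u ^ (2 * k) * x ^ n := by ring
  refine ⟨⟨2 * k, main⟩, fun _ => 2 * k, ?_, main⟩
  simpa using tendsto_const_div_atTop_nhds_zero_nat (2 * k : ℝ)
end

section
/- Let S be a preordered semiring of polynomial growth with power universal element u. Then for every monotone semiring homomorphism f from S into the nonnegative reals (or into the tropical semiring) and every nonzero x ∈ S, we have f(x) > 0. -/
/-- **Monotone homomorphisms are strictly positive on nonzero elements.**
Let `S` be a preordered semiring of polynomial growth with power universal element `u`.
Every monotone semiring homomorphism `f` from `S` into the nonnegative reals — either a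
genuine homomorphism (additive) or a homomorphism into the tropical semiring
(`max`-additive), both with the usual multiplication and order — satisfies `f x > 0`
for every nonzero `x ∈ S`. -/
theorem spectral_point_positive
    {S : Type*} [CommSemiring S] [Preorder S]
    (hadd : ∀ x y z : S, x ≤ y → x + z ≤ y + z)
    (hmul : ∀ x y z : S, x ≤ y → x * z ≤ y * z)
    (u : S) (hu1 : 1 ≤ u)
    (hupu : ∀ x : S, x ≠ 0 → ∃ k : ℕ, x ≤ u ^ k ∧ 1 ≤ u ^ k * x)
    (f : S → ℝ)
    (hf_nonneg : ∀ x : S, 0 ≤ f x)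
    (hf0 : f 0 = 0) (hf1 : f 1 = 1)
    (hf_mul : ∀ x y : S, f (x * y) = f x * f y)
    (hf_add : (∀ x y : S, f (x + y) = f x + f y) ∨ (∀ x y : S, f (x + y) = max (f x) (f y)))
    (hf_mono : ∀ x y : S, x ≤ y → f x ≤ f y)
    (x : S) (hx : x ≠ 0) :
    0 < f x := by
  obtain ⟨k, -, hk⟩ := hupu x hx
  have h1 : (1 : ℝ) ≤ f (u ^ k) * f x := by
    have := hf_mono 1 (u ^ k * x) hk
    rwa [hf1, hf_mul] at this
  rcases eq_or_lt_of_le (hf_nonneg x) with h | h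
  · rw [← h, mul_zero] at h1; linarith
  · exact h
end

section
/- In the semiring of pairs of families of positive definite operators over compact spaces X and Y under relative submajorization, the element u = (2·1_X, 1_Y) (the pair of constant scalar families 2 and 1 on ℂ) is power universal: u ≽ 1, and for every nonzero pair (ρ,σ) there exists k ∈ ℕ with (ρ,σ) ≼ u^k and 1 ≼ u^k·(ρ,σ). -/
open Matrix Kronecker ComplexOrder

variable {n m : Type*}

/-- Loewner order: `loewner A B` means `A ≤ B`. -/
def loewner [Fintype n] (A B : Matrix n n ℂ) : Prop := (B - A).PosSemidef

/-- The map `Φ ⊗ id_k` on block matrices. -/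
def blockMap [Fintype n] [Fintype m] (Φ : Matrix n n ℂ →ₗ[ℂ] Matrix m m ℂ) (k : ℕ)
    (A : Matrix (n × Fin k) (n × Fin k) ℂ) : Matrix (m × Fin k) (m × Fin k) ℂ :=
  Matrix.of fun p q => Φ (Matrix.of fun a b => A (a, p.2) (b, q.2)) p.1 q.1

/-- Complete positivity of a linear map between matrix algebras. -/
def IsCP [Fintype n] [Fintype m] (Φ : Matrix n n ℂ →ₗ[ℂ] Matrix m m ℂ) : Prop :=
  ∀ (k : ℕ) (A : Matrix (n × Fin k) (n × Fin k) ℂ), A.PosSemidef → (blockMap Φ k A).PosSemidef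

/-- Trace nonincreasing on positive semidefinite operators. -/
def IsTNI [Fintype n] [Fintype m] (Φ : Matrix n n ℂ →ₗ[ℂ] Matrix m m ℂ) : Prop :=
  ∀ A : Matrix n n ℂ, A.PosSemidef → ((Φ A).trace).re ≤ (A.trace).re

-- auxiliary
lemma smul_psd [Fintype n] {c : ℝ} (hc : 0 ≤ c) {A : Matrix n n ℂ} (hA : A.PosSemidef) :
    ((c : ℂ) • A).PosSemidef := by
  refine posSemidef_iff_dotProduct_mulVec.mpr ⟨?_, ?_⟩
  · unfold Matrix.IsHermitian
    rw [conjTranspose_smul, hA.1]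
    simp
  · intro x
    rw [smul_mulVec, dotProduct_smul, smul_eq_mul]
    exact mul_nonneg (by exact_mod_cast hc) (hA.dotProduct_mulVec_nonneg x)

lemma psd_sum {ι : Type*} [Fintype n] (s : Finset ι) (F : ι → Matrix n n ℂ)
    (h : ∀ i ∈ s, (F i).PosSemidef) : (∑ i ∈ s, F i).PosSemidef :=
  Finset.sum_induction F _ (fun _ _ ha hb => ha.add hb) .zero h

lemma diag_nonneg [Fintype n] [DecidableEq n] {A : Matrix n n ℂ} (hA : A.PosSemidef) (i : n) :
    0 ≤ A i i := by
  have := hA.dotProduct_mulVec_nonneg (Pi.single i 1)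
  simpa [dotProduct, mulVec, Pi.single_apply] using this

lemma diag_pos [Fintype n] [DecidableEq n] {A : Matrix n n ℂ} (hA : A.PosDef) (i : n) :
    0 < A i i := by
  have hne : (Pi.single i 1 : n → ℂ) ≠ 0 := by
    intro h0
    have := congrFun h0 i
    simp at this
  have := hA.dotProduct_mulVec_pos hne
  simpa [dotProduct, mulVec, Pi.single_apply] using this

lemma trace_psd_nonneg [Fintype n] [DecidableEq n] {A : Matrix n n ℂ} (hA : A.PosSemidef) :
    0 ≤ A.trace :=
  Finset.sum_nonneg fun i _ => diag_nonneg hA i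

lemma trace_posdef_pos [Fintype n] [DecidableEq n] [Nonempty n] {A : Matrix n n ℂ}
    (hA : A.PosDef) : 0 < A.trace :=
  Finset.sum_pos (fun i _ => diag_pos hA i) Finset.univ_nonempty

/-- `traceToScalar c` sends `A` to `c ⬝ tr A` as a `1 × 1` matrix. -/
noncomputable def traceToScalar [Fintype n] (c : ℝ) :
    Matrix n n ℂ →ₗ[ℂ] Matrix (Fin 1) (Fin 1) ℂ where
  toFun A := ((c : ℂ) * A.trace) • 1
  map_add' A B := by simp [trace_add, mul_add, add_smul]
  map_smul' s A := by
    simp only [trace_smul, smul_eq_mul, RingHom.id_apply, ← smul_smul]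
    rw [smul_comm]

/-- `scalarToId c` sends a `1 × 1` matrix `A` to `c ⬝ A₀₀ ⬝ 1`. -/
noncomputable def scalarToId [Fintype n] [DecidableEq n] (c : ℝ) :
    Matrix (Fin 1) (Fin 1) ℂ →ₗ[ℂ] Matrix n n ℂ where
  toFun A := ((c : ℂ) * A 0 0) • 1
  map_add' A B := by simp [mul_add, add_smul]
  map_smul' s A := by
    simp only [Matrix.smul_apply, smul_eq_mul, RingHom.id_apply, ← smul_smul]
    rw [smul_comm]

lemma traceToScalar_cp [Fintype n] [DecidableEq n] {c : ℝ} (hc : 0 ≤ c) :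
    IsCP (traceToScalar (n := n) c) := by
  intro k A hA
  have heq : blockMap (traceToScalar c) k A = (c : ℂ) •
      ∑ a : n, A.submatrix (fun p : Fin 1 × Fin k => (a, p.2)) (fun q => (a, q.2)) := by
    ext p q
    have hpq : p.1 = q.1 := Subsingleton.elim _ _
    simp only [blockMap, traceToScalar, LinearMap.coe_mk, AddHom.coe_mk, of_apply,
      Matrix.smul_apply, smul_eq_mul, Matrix.sum_apply, submatrix_apply, Matrix.trace, Matrix.diag,
      Finset.mul_sum]
    rw [show (1 : Matrix (Fin 1) (Fin 1) ℂ) p.1 q.1 = 1 from by rw [hpq, one_apply_eq], mul_one]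
  rw [heq]
  exact smul_psd hc (psd_sum _ _ fun a _ => hA.submatrix _)

lemma scalarToId_cp [Fintype n] [DecidableEq n] {c : ℝ} (hc : 0 ≤ c) :
    IsCP (scalarToId (n := n) c) := by
  intro k A hA
  set B := A.submatrix (fun j : Fin k => ((0 : Fin 1), j)) (fun j => ((0 : Fin 1), j)) with hBdef
  have hB : B.PosSemidef := hA.submatrix _
  set U : n → Matrix (n × Fin k) (Fin k) ℂ :=
    (fun a => Matrix.of fun p j => if p = (a, j) then 1 else 0) with hU
  have hentry : ∀ (a : n) (p q : n × Fin k), (U a * B * (U a)ᴴ) p q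
      = (if p.1 = a then 1 else 0) * (if q.1 = a then 1 else 0) * B p.2 q.2 := by
    intro a p q
    rw [hU]
    simp only [mul_apply, conjTranspose_apply, of_apply, Prod.ext_iff]
    simp only [ite_and, apply_ite (starRingEnd ℂ), Finset.sum_ite_eq, mul_comm,
      _root_.map_one, _root_.map_zero, mul_ite, mul_zero, mul_one, ite_mul, zero_mul, one_mul,
      Finset.sum_ite_eq']
    split_ifs <;> simp
  have heq : blockMap (scalarToId c) k A = (c : ℂ) • ∑ a : n, U a * B * (U a)ᴴ := by
    ext p q
    simp only [blockMap, scalarToId, LinearMap.coe_mk, AddHom.coe_mk, of_apply,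
      Matrix.smul_apply, smul_eq_mul, Matrix.sum_apply, hentry]
    rw [← Finset.sum_mul,
      show (∑ x : n, ((if p.1 = x then (1:ℂ) else 0) * if q.1 = x then 1 else 0))
        = (1 : Matrix n n ℂ) p.1 q.1 from by simp [Finset.sum_ite_eq, one_apply, eq_comm]]
    simp only [hBdef, submatrix_apply]
    ring
  rw [heq]
  exact smul_psd hc (psd_sum _ _ fun a _ => hB.mul_mul_conjTranspose_same _)

lemma quad_star [Fintype n] {A : Matrix n n ℂ} (hA : A.IsHermitian) (x : n → ℂ) :
    star (star x ⬝ᵥ A *ᵥ x) = star x ⬝ᵥ A *ᵥ x := by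
  nth_rewrite 2 [← hA]
  simp only [dotProduct, mulVec, Finset.mul_sum, star_sum, star_mul', star_star,
    conjTranspose_apply, Pi.star_apply]
  rw [Finset.sum_comm]
  refine Finset.sum_congr rfl fun i _ => Finset.sum_congr rfl fun j _ => by ring

lemma psd_of_sphere_bound [Fintype n] {A : Matrix n n ℂ} (hA : A.IsHermitian)
    (h : ∀ v : n → ℂ, (∑ i, Complex.normSq (v i)) = 1 → 0 ≤ (star v ⬝ᵥ A *ᵥ v).re) :
    A.PosSemidef := by
  refine .of_dotProduct_mulVec_nonneg hA fun x => ?_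
  have him : (star x ⬝ᵥ A *ᵥ x).im = 0 := by
    have h1 := congrArg Complex.im (quad_star hA x)
    simp only [RCLike.star_def, Complex.conj_im] at h1
    linarith
  rw [Complex.nonneg_iff]
  refine ⟨?_, him.symm⟩
  by_cases hx : x = 0
  · simp [hx]
  · set s := ∑ i, Complex.normSq (x i) with hs
    have hspos : 0 < s := by
      obtain ⟨i, hi⟩ := Function.ne_iff.mp hx
      exact Finset.sum_pos' (fun j _ => Complex.normSq_nonneg _)
        ⟨i, Finset.mem_univ i, Complex.normSq_pos.mpr hi⟩
    set t := Real.sqrt s with htdef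
    have ht : 0 < t := Real.sqrt_pos.mpr hspos
    set w : n → ℂ := ((t : ℂ))⁻¹ • x with hw
    have hxw : x = (t : ℂ) • w := by
      rw [hw, smul_smul, mul_inv_cancel₀ (by exact_mod_cast ht.ne'), one_smul]
    have hwsph : ∑ i, Complex.normSq (w i) = 1 := by
      have : ∀ i, Complex.normSq (w i) = s⁻¹ * Complex.normSq (x i) := by
        intro i
        rw [hw]
        simp only [Pi.smul_apply, smul_eq_mul, Complex.normSq_mul, Complex.normSq_inv]
        congr 1
        rw [Complex.normSq_ofReal, htdef, Real.mul_self_sqrt hspos.le]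
      simp only [this, ← Finset.mul_sum, ← hs, inv_mul_cancel₀ hspos.ne']
    have hquad : (star x ⬝ᵥ A *ᵥ x) = (t : ℂ) * (t : ℂ) * (star w ⬝ᵥ A *ᵥ w) := by
      rw [hxw]
      simp only [star_smul, smul_dotProduct, mulVec_smul, dotProduct_smul, smul_eq_mul,
        RCLike.star_def, Complex.conj_ofReal]
      ring
    rw [hquad]
    have : ((t : ℂ) * (t : ℂ) * (star w ⬝ᵥ A *ᵥ w)).re = t * t * (star w ⬝ᵥ A *ᵥ w).re := by
      have : ((t : ℂ) * (t : ℂ)) = ((t * t : ℝ) : ℂ) := by push_cast; ring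
      rw [this, Complex.re_ofReal_mul]
    rw [this]
    exact mul_nonneg (mul_nonneg ht.le ht.le) (h w hwsph)

lemma dot_self_eq (v : n → ℂ) [Fintype n] :
    star v ⬝ᵥ v = ((∑ i, Complex.normSq (v i) : ℝ) : ℂ) := by
  push_cast
  simp [dotProduct, Complex.normSq_eq_conj_mul_self]

lemma key [Fintype n] [DecidableEq n] [Nonempty n] {Z : Type*} [TopologicalSpace Z]
    [CompactSpace Z] [Nonempty Z]
    (τ : Z → Matrix n n ℂ) (hcont : Continuous τ) (h : ∀ z, (τ z).PosDef) :
    ∃ m M : ℝ, 0 < m ∧ ∀ z : Z,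
      ((τ z) - (m : ℂ) • 1).PosSemidef ∧ (((M : ℂ) • 1) - τ z).PosSemidef := by
  classical
  set S : Set (n → ℂ) := {v | ∑ i, Complex.normSq (v i) = 1} with hS
  have hScl : IsClosed S :=
    isClosed_eq (continuous_finset_sum _ fun i _ =>
      Complex.continuous_normSq.comp (continuous_apply i)) continuous_const
  have hSbd : Bornology.IsBounded S := by
    refine (Metric.isBounded_closedBall (x := (0 : n → ℂ)) (r := 1)).subset ?_
    intro v hv
    rw [Metric.mem_closedBall, dist_zero_right]
    refine (pi_norm_le_iff_of_nonneg zero_le_one).mpr fun i => ?_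
    have h1 : Complex.normSq (v i) ≤ 1 := by
      rw [← hv]
      exact Finset.single_le_sum (fun j _ => Complex.normSq_nonneg _) (Finset.mem_univ i)
    have h2 : ‖v i‖ ^ 2 = Complex.normSq (v i) := Complex.sq_norm _
    nlinarith [norm_nonneg (v i)]
  have hScomp : IsCompact S := Metric.isCompact_of_isClosed_isBounded hScl hSbd
  have hSne : S.Nonempty := by
    refine ⟨Pi.single (Classical.arbitrary n) 1, ?_⟩
    simp [hS, Pi.single_apply, apply_ite Complex.normSq]
  set f : Z × (n → ℂ) → ℝ := fun p => (star p.2 ⬝ᵥ (τ p.1) *ᵥ p.2).re with hf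
  have hfc : Continuous f :=
    Complex.continuous_re.comp ((continuous_star.comp continuous_snd).dotProduct
      ((hcont.comp continuous_fst).matrix_mulVec continuous_snd))
  set K : Set (Z × (n → ℂ)) := Set.univ ×ˢ S with hK
  have hKcomp : IsCompact K := isCompact_univ.prod hScomp
  have hKne : K.Nonempty := Set.univ_nonempty.prod hSne
  obtain ⟨⟨z1, v1⟩, hmem1, hmin⟩ := hKcomp.exists_isMinOn hKne hfc.continuousOn
  obtain ⟨⟨z2, v2⟩, hmem2, hmax⟩ := hKcomp.exists_isMaxOn hKne hfc.continuousOn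
  refine ⟨f (z1, v1), f (z2, v2), ?_, fun z => ?_⟩
  · have hv1S : v1 ∈ S := hmem1.2
    have hv1ne : v1 ≠ 0 := by
      intro h0
      rw [hS] at hv1S
      simp [h0] at hv1S
    have := (h z1).dotProduct_mulVec_pos hv1ne
    exact (Complex.pos_iff.mp this).1
  · constructor
    · refine psd_of_sphere_bound ((h z).1.sub ?_) fun v hv => ?_
      · unfold Matrix.IsHermitian
        rw [conjTranspose_smul, conjTranspose_one]
        simp
      · have hle : f (z1, v1) ≤ f (z, v) := hmin (Set.mk_mem_prod (Set.mem_univ z) hv)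
        rw [sub_mulVec, dotProduct_sub, Complex.sub_re]
        have : star v ⬝ᵥ ((f (z1, v1) : ℂ) • 1) *ᵥ v = ((f (z1, v1)) : ℂ) * star v ⬝ᵥ v := by
          rw [smul_mulVec, one_mulVec, dotProduct_smul, smul_eq_mul]
        rw [this, dot_self_eq, hv]
        simp only [Complex.ofReal_one, mul_one, Complex.ofReal_re]
        linarith
    · refine psd_of_sphere_bound (Matrix.IsHermitian.sub ?_ (h z).1) fun v hv => ?_
      · unfold Matrix.IsHermitian
        rw [conjTranspose_smul, conjTranspose_one]
        simp
      · have hle : f (z, v) ≤ f (z2, v2) := hmax (Set.mk_mem_prod (Set.mem_univ z) hv)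
        rw [sub_mulVec, dotProduct_sub, Complex.sub_re]
        have : star v ⬝ᵥ ((f (z2, v2) : ℂ) • 1) *ᵥ v = ((f (z2, v2)) : ℂ) * star v ⬝ᵥ v := by
          rw [smul_mulVec, one_mulVec, dotProduct_smul, smul_eq_mul]
        rw [this, dot_self_eq, hv]
        simp only [Complex.ofReal_one, mul_one, Complex.ofReal_re]
        linarith

lemma scalarToId_tni [Fintype n] [DecidableEq n] {c : ℝ} (hc : 0 ≤ c)
    (h1 : c * (Fintype.card n : ℝ) ≤ 1) : IsTNI (scalarToId (n := n) c) := by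
  intro A hA
  have h00 := diag_nonneg hA 0
  obtain ⟨hre, him⟩ := Complex.nonneg_iff.mp h00
  have hA00 : A 0 0 = ((A 0 0).re : ℂ) := Complex.ext rfl (by simp [← him])
  have ht : (scalarToId (n := n) c A).trace = ((c : ℂ) * A 0 0) * (Fintype.card n : ℂ) := by
    simp [scalarToId, trace_smul, trace_one, smul_eq_mul]
  rw [ht, Matrix.trace_fin_one, hA00, ← Complex.ofReal_natCast, ← Complex.ofReal_mul,
    ← Complex.ofReal_mul, Complex.ofReal_re, Complex.ofReal_re]
  nlinarith

lemma traceToScalar_tni [Fintype n] [DecidableEq n] {c : ℝ} (hc : 0 ≤ c) (h1 : c ≤ 1) :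
    IsTNI (traceToScalar (n := n) c) := by
  intro A hA
  obtain ⟨hre, him⟩ := Complex.nonneg_iff.mp (trace_psd_nonneg hA)
  have htr : A.trace = ((A.trace.re : ℝ) : ℂ) := Complex.ext rfl (by simp [← him])
  have ht : (traceToScalar (n := n) c A).trace = (c : ℂ) * A.trace := by
    simp [traceToScalar, trace_smul, trace_one, smul_eq_mul, Matrix.trace_fin_one]
  rw [ht, htr, ← Complex.ofReal_mul, Complex.ofReal_re, Complex.ofReal_re]
  nlinarith

/-- **The pair `u = (2·1_X, 1_Y)` of constant scalar families on `ℂ` is power universal**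
in the semiring of pairs of continuous families of positive definite operators over
nonempty compact Hausdorff spaces `X, Y` under relative submajorization.  Scalars are
modelled as `1 × 1` matrices, and `u ^ k ⋅ (ρ, σ)` is identified with `(2 ^ k • ρ, σ)`.
The three claims are: `u ≽ 1`; for every nonzero pair `(ρ,σ)` there is `k` with
`(ρ,σ) ≼ u ^ k`; and `1 ≼ u ^ k ⋅ (ρ,σ)` — each inequality witnessed by a completely
positive trace-nonincreasing map acting as required pointwise on the families. -/
theorem pair_two_one_power_universal
    {X Y : Type*} [TopologicalSpace X] [TopologicalSpace Y]
    [CompactSpace X] [CompactSpace Y] [Nonempty X] [Nonempty Y] [T2Space X] [T2Space Y]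
    {n : Type*} [Fintype n] [DecidableEq n] [Nonempty n]
    (ρ : X → Matrix n n ℂ) (σ : Y → Matrix n n ℂ)
    (hρc : Continuous ρ) (hσc : Continuous σ)
    (hρ : ∀ x, (ρ x).PosDef) (hσ : ∀ y, (σ y).PosDef) :
    (∃ T : Matrix (Fin 1) (Fin 1) ℂ →ₗ[ℂ] Matrix (Fin 1) (Fin 1) ℂ,
        IsCP T ∧ IsTNI T ∧ loewner 1 (T ((2 : ℂ) • 1)) ∧ loewner (T 1) 1) ∧
    (∃ k : ℕ, ∃ T : Matrix (Fin 1) (Fin 1) ℂ →ₗ[ℂ] Matrix n n ℂ,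
        IsCP T ∧ IsTNI T ∧
        (∀ x, loewner (ρ x) (T (((2 : ℂ) ^ k) • 1))) ∧
        (∀ y, loewner (T 1) (σ y))) ∧
    (∃ k : ℕ, ∃ T : Matrix n n ℂ →ₗ[ℂ] Matrix (Fin 1) (Fin 1) ℂ,
        IsCP T ∧ IsTNI T ∧
        (∀ x, loewner 1 (T (((2 : ℂ) ^ k) • ρ x))) ∧
        (∀ y, loewner (T (σ y)) 1)) := by
  obtain ⟨mρ, Mρ, hmρ, hρb⟩ := key ρ hρc hρ
  obtain ⟨mσ, Mσ, hmσ, hσb⟩ := key σ hσc hσ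
  -- trace bounds
  have hgXc : Continuous fun x => ((ρ x).trace).re :=
    Complex.continuous_re.comp hρc.matrix_trace
  have hgYc : Continuous fun y => ((σ y).trace).re :=
    Complex.continuous_re.comp hσc.matrix_trace
  obtain ⟨x1, -, hx1⟩ := isCompact_univ.exists_isMinOn Set.univ_nonempty hgXc.continuousOn
  obtain ⟨y1, -, hy1⟩ := isCompact_univ.exists_isMaxOn Set.univ_nonempty hgYc.continuousOn
  set δ := ((ρ x1).trace).re with hδdef
  set Mt := ((σ y1).trace).re with hMtdef
  have hδpos : 0 < δ := (Complex.pos_iff.mp (trace_posdef_pos (hρ x1))).1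
  have hMtpos : 0 < Mt := (Complex.pos_iff.mp (trace_posdef_pos (hσ y1))).1
  have hδle : ∀ x, δ ≤ ((ρ x).trace).re := fun x => hx1 (Set.mem_univ x)
  have hMtge : ∀ y, ((σ y).trace).re ≤ Mt := fun y => hy1 (Set.mem_univ y)
  refine ⟨⟨LinearMap.id, ?_, ?_, ?_, ?_⟩, ?_, ?_⟩
  · intro k A hA
    have : blockMap LinearMap.id k A = A := by
      ext ⟨a, i⟩ ⟨b, j⟩
      rfl
    rwa [this]
  · intro A _
    exact le_rfl
  · unfold loewner
    simp only [LinearMap.id_coe, id_eq]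
    have : ((2:ℂ) • 1 - 1 : Matrix (Fin 1) (Fin 1) ℂ) = 1 := by
      ext i j
      fin_cases i; fin_cases j
      simp [one_apply]
      norm_num
    rw [this]
    exact .one
  · unfold loewner
    simp only [LinearMap.id_coe, id_eq, sub_self]
    exact .zero
  -- second part
  · set c2 : ℝ := min mσ ((Fintype.card n : ℝ))⁻¹ with hc2def
    have hc2pos : 0 < c2 :=
      lt_min hmσ (inv_pos.mpr (by exact_mod_cast Fintype.card_pos))
    obtain ⟨k, hk⟩ := pow_unbounded_of_one_lt (Mρ / c2) (one_lt_two (α := ℝ))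
    have hMρlt : Mρ < c2 * 2 ^ k := by
      have := (div_lt_iff₀ hc2pos).mp hk
      linarith
    refine ⟨k, scalarToId c2, scalarToId_cp hc2pos.le, scalarToId_tni hc2pos.le ?_, ?_, ?_⟩
    · have hcard : (0:ℝ) < (Fintype.card n : ℝ) := by exact_mod_cast Fintype.card_pos
      have h1 : c2 ≤ ((Fintype.card n : ℝ))⁻¹ := min_le_right _ _
      calc c2 * (Fintype.card n : ℝ) ≤ ((Fintype.card n : ℝ))⁻¹ * (Fintype.card n : ℝ) := by
              nlinarith
        _ = 1 := inv_mul_cancel₀ hcard.ne'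
    · intro x
      show ((scalarToId c2 ((2:ℂ) ^ k • 1) : Matrix n n ℂ) - ρ x).PosSemidef
      have heq : (scalarToId c2 ((2:ℂ) ^ k • 1) : Matrix n n ℂ) - ρ x
          = (((c2 * 2 ^ k - Mρ : ℝ)) : ℂ) • (1 : Matrix n n ℂ) + ((Mρ : ℂ) • 1 - ρ x) := by
        simp only [scalarToId, LinearMap.coe_mk, AddHom.coe_mk, Matrix.smul_apply, one_apply_eq,
          smul_eq_mul, mul_one]
        push_cast
        module
      rw [heq]
      exact (smul_psd (by linarith) .one).add (hρb x).2
    · intro y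
      show (σ y - (scalarToId c2 1 : Matrix n n ℂ)).PosSemidef
      have heq : σ y - (scalarToId c2 1 : Matrix n n ℂ)
          = (σ y - (mσ : ℂ) • 1) + (((mσ - c2 : ℝ)) : ℂ) • (1 : Matrix n n ℂ) := by
        simp only [scalarToId, LinearMap.coe_mk, AddHom.coe_mk, one_apply_eq, mul_one]
        push_cast
        module
      rw [heq]
      exact (hσb y).1.add (smul_psd (sub_nonneg.mpr (min_le_left _ _)) .one)
  -- third part
  · set c3 : ℝ := min 1 Mt⁻¹ with hc3def
    have hc3pos : 0 < c3 := lt_min one_pos (inv_pos.mpr hMtpos)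
    obtain ⟨k, hk⟩ := pow_unbounded_of_one_lt (1 / (c3 * δ)) (one_lt_two (α := ℝ))
    have hk' : 1 < c3 * δ * 2 ^ k := by
      have := (div_lt_iff₀ (by positivity)).mp hk
      linarith
    refine ⟨k, traceToScalar c3, traceToScalar_cp hc3pos.le,
      traceToScalar_tni hc3pos.le (min_le_left _ _), ?_, ?_⟩
    · intro x
      show ((traceToScalar c3 ((2:ℂ) ^ k • ρ x) : Matrix (Fin 1) (Fin 1) ℂ) - 1).PosSemidef
      have htr : (ρ x).trace = ((((ρ x).trace).re : ℝ) : ℂ) :=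
        Complex.ext rfl (by
          simpa using ((Complex.nonneg_iff.mp (trace_psd_nonneg (hρ x).posSemidef)).2).symm)
      have heq : (traceToScalar c3 ((2:ℂ) ^ k • ρ x) : Matrix (Fin 1) (Fin 1) ℂ) - 1
          = (((c3 * 2 ^ k * ((ρ x).trace).re - 1 : ℝ)) : ℂ) • (1 : Matrix (Fin 1) (Fin 1) ℂ) := by
        simp only [traceToScalar, LinearMap.coe_mk, AddHom.coe_mk, trace_smul, smul_eq_mul]
        rw [htr]
        push_cast
        simp only [Complex.ofReal_re]
        module
      rw [heq]
      refine smul_psd ?_ .one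
      have h1 := hδle x
      nlinarith
    · intro y
      show ((1 : Matrix (Fin 1) (Fin 1) ℂ) - traceToScalar c3 (σ y)).PosSemidef
      have hnn := Complex.nonneg_iff.mp (trace_psd_nonneg (hσ y).posSemidef)
      have htr : (σ y).trace = ((((σ y).trace).re : ℝ) : ℂ) :=
        Complex.ext rfl (by simpa using hnn.2.symm)
      have heq : (1 : Matrix (Fin 1) (Fin 1) ℂ) - traceToScalar c3 (σ y)
          = (((1 - c3 * ((σ y).trace).re : ℝ)) : ℂ) • (1 : Matrix (Fin 1) (Fin 1) ℂ) := by
        simp only [traceToScalar, LinearMap.coe_mk, AddHom.coe_mk, smul_eq_mul]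
        rw [htr]
        push_cast
        simp only [Complex.ofReal_re]
        module
      rw [heq]
      refine smul_psd ?_ .one
      have h1 := hMtge y
      have h2 : c3 ≤ Mt⁻¹ := min_le_right _ _
      have h3 : Mt⁻¹ * Mt = 1 := inv_mul_cancel₀ hMtpos.ne'
      nlinarith [hnn.1]
end

section
/- Let X, Y be compact Hausdorff spaces, μ, ν Radon measures with μ(X) = α ≥ 1 and ν(Y) = α − 1, and suppose μ is a point mass at x ∈ X. Then the function f(p,q) = exp(∫_X ln p dμ − ∫_Y ln q dν) = p(x)^α · exp((1−α)∫_Y ln q dγ) (where γ = ν/ν(Y) when α > 1) defined on pairs of strictly positive continuous functions p ∈ C(X,ℝ_{>0}), q ∈ C(Y,ℝ_{>0}) is jointly convex. -/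
open MeasureTheory Real

lemma convex_comb_pos {lam a b : ℝ} (hl0 : 0 ≤ lam) (hl1 : lam ≤ 1)
    (ha : 0 < a) (hb : 0 < b) : 0 < lam * a + (1 - lam) * b := by
  rcases eq_or_lt_of_le hl0 with h | h
  · simpa [← h] using hb
  · exact add_pos_of_pos_of_nonneg (mul_pos h ha) (mul_nonneg (by linarith) hb.le)

section Aux
variable {Y : Type*} [TopologicalSpace Y] [CompactSpace Y] [T2Space Y]
  [MeasurableSpace Y] [BorelSpace Y] (γ : Measure Y) [IsProbabilityMeasure γ]

lemma cont_integrable {g : Y → ℝ} (hg : Continuous g) : Integrable g γ :=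
  hg.integrable_of_hasCompactSupport (HasCompactSupport.of_compactSpace g)

lemma jensen_exp {g : Y → ℝ} (hg : Continuous g) :
    Real.exp (∫ y, g y ∂γ) ≤ ∫ y, Real.exp (g y) ∂γ :=
  convexOn_exp.map_integral_le continuous_exp.continuousOn isClosed_univ
    (Filter.Eventually.of_forall fun _ => trivial) (cont_integrable γ hg)
    (cont_integrable γ (continuous_exp.comp hg))

lemma ratio_le {u m : Y → ℝ} (hu : Continuous u) (hm : Continuous m)
    (hup : ∀ y, 0 < u y) (hmp : ∀ y, 0 < m y) :
    Real.exp (∫ y, Real.log (u y) ∂γ)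
      ≤ (∫ y, u y / m y ∂γ) * Real.exp (∫ y, Real.log (m y) ∂γ) := by
  have hcd : Continuous fun y => u y / m y := hu.div hm fun y => (hmp y).ne'
  have hcl : Continuous fun y => Real.log (u y / m y) :=
    hcd.log fun y => (div_pos (hup y) (hmp y)).ne'
  have h1 : ∫ y, Real.log (u y / m y) ∂γ
      = (∫ y, Real.log (u y) ∂γ) - ∫ y, Real.log (m y) ∂γ := by
    rw [← integral_sub (cont_integrable γ (hu.log fun y => (hup y).ne'))
      (cont_integrable γ (hm.log fun y => (hmp y).ne'))]
    exact integral_congr_ae (Filter.Eventually.of_forall fun y =>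
      Real.log_div (hup y).ne' (hmp y).ne')
  have h2 : Real.exp (∫ y, Real.log (u y) ∂γ)
      = Real.exp (∫ y, Real.log (u y / m y) ∂γ) * Real.exp (∫ y, Real.log (m y) ∂γ) := by
    rw [h1, ← Real.exp_add]; ring_nf
  rw [h2]
  gcongr ?_ * _
  calc Real.exp (∫ y, Real.log (u y / m y) ∂γ)
      ≤ ∫ y, Real.exp (Real.log (u y / m y)) ∂γ := jensen_exp γ hcl
    _ = ∫ y, u y / m y ∂γ := integral_congr_ae (Filter.Eventually.of_forall fun y =>
        Real.exp_log (div_pos (hup y) (hmp y)))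

lemma geom_concave {lam : ℝ} (hl0 : 0 ≤ lam) (hl1 : lam ≤ 1)
    {q q' : Y → ℝ} (hq : Continuous q) (hq' : Continuous q')
    (hqp : ∀ y, 0 < q y) (hq'p : ∀ y, 0 < q' y) :
    lam * Real.exp (∫ y, Real.log (q y) ∂γ) + (1 - lam) * Real.exp (∫ y, Real.log (q' y) ∂γ)
      ≤ Real.exp (∫ y, Real.log (lam * q y + (1 - lam) * q' y) ∂γ) := by
  set m : Y → ℝ := fun y => lam * q y + (1 - lam) * q' y with hmdef
  have hm : Continuous m := by fun_prop
  have hmp : ∀ y, 0 < m y := fun y => convex_comb_pos hl0 hl1 (hqp y) (hq'p y)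
  have hi1 : Integrable (fun y => q y / m y) γ :=
    cont_integrable γ (hq.div hm fun y => (hmp y).ne')
  have hi2 : Integrable (fun y => q' y / m y) γ :=
    cont_integrable γ (hq'.div hm fun y => (hmp y).ne')
  have H1 := ratio_le γ hq hm hqp hmp
  have H2 := ratio_le γ hq' hm hq'p hmp
  have e1 : ∫ y, (lam * (q y / m y) + (1 - lam) * (q' y / m y)) ∂γ = 1 := by
    have : ∀ y, lam * (q y / m y) + (1 - lam) * (q' y / m y) = 1 := by
      intro y
      rw [mul_div_assoc', mul_div_assoc', ← add_div, hmdef, div_self (hmp y).ne']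
    rw [integral_congr_ae (Filter.Eventually.of_forall fun y => this y)]
    simp
  have e2 : ∫ y, (lam * (q y / m y) + (1 - lam) * (q' y / m y)) ∂γ
      = lam * (∫ y, q y / m y ∂γ) + (1 - lam) * ∫ y, q' y / m y ∂γ := by
    rw [integral_add (hi1.const_mul lam) (hi2.const_mul (1 - lam)),
      integral_const_mul, integral_const_mul]
  have key : lam * (∫ y, q y / m y ∂γ) + (1 - lam) * ∫ y, q' y / m y ∂γ = 1 := by
    rw [← e2, e1]
  calc lam * Real.exp (∫ y, Real.log (q y) ∂γ) + (1 - lam) * Real.exp (∫ y, Real.log (q' y) ∂γ)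
      ≤ lam * ((∫ y, q y / m y ∂γ) * Real.exp (∫ y, Real.log (m y) ∂γ))
        + (1 - lam) * ((∫ y, q' y / m y ∂γ) * Real.exp (∫ y, Real.log (m y) ∂γ)) := by
        gcongr <;> linarith
    _ = (lam * (∫ y, q y / m y ∂γ) + (1 - lam) * ∫ y, q' y / m y ∂γ)
        * Real.exp (∫ y, Real.log (m y) ∂γ) := by ring
    _ = Real.exp (∫ y, Real.log (m y) ∂γ) := by rw [key, one_mul]

end Aux

lemma rpow_joint {α : ℝ} (hα : 1 ≤ α) {lam a1 a2 b1 b2 : ℝ}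
    (hl0 : 0 ≤ lam) (hl1 : lam ≤ 1) (ha1 : 0 < a1) (ha2 : 0 < a2)
    (hb1 : 0 < b1) (hb2 : 0 < b2) :
    (lam * a1 + (1 - lam) * a2) ^ α * (lam * b1 + (1 - lam) * b2) ^ (1 - α)
      ≤ lam * (a1 ^ α * b1 ^ (1 - α)) + (1 - lam) * (a2 ^ α * b2 ^ (1 - α)) := by
  set A := lam * a1 + (1 - lam) * a2 with hA
  set B := lam * b1 + (1 - lam) * b2 with hB
  have hApos : 0 < A := convex_comb_pos hl0 hl1 ha1 ha2
  have hBpos : 0 < B := convex_comb_pos hl0 hl1 hb1 hb2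
  have hμsum : lam * b1 / B + (1 - lam) * b2 / B = 1 := by field_simp; exact hB.symm
  have hconv := (convexOn_rpow hα).2 (Set.mem_Ici.2 (div_pos ha1 hb1).le)
    (Set.mem_Ici.2 (div_pos ha2 hb2).le)
    (div_nonneg (mul_nonneg hl0 hb1.le) hBpos.le)
    (div_nonneg (mul_nonneg (by linarith) hb2.le) hBpos.le) hμsum
  simp only [smul_eq_mul] at hconv
  have harg : lam * b1 / B * (a1 / b1) + (1 - lam) * b2 / B * (a2 / b2) = A / B := by
    field_simp; ring
  rw [harg] at hconv
  have hmul := mul_le_mul_of_nonneg_left hconv hBpos.le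
  calc A ^ α * B ^ (1 - α)
      = B * (A / B) ^ α := by
        rw [Real.div_rpow hApos.le hBpos.le, Real.rpow_sub hBpos, Real.rpow_one]
        field_simp
    _ ≤ B * (lam * b1 / B * (a1 / b1) ^ α + (1 - lam) * b2 / B * (a2 / b2) ^ α) := hmul
    _ = lam * (b1 * (a1 / b1) ^ α) + (1 - lam) * (b2 * (a2 / b2) ^ α) := by
        field_simp
    _ = lam * (a1 ^ α * b1 ^ (1 - α)) + (1 - lam) * (a2 ^ α * b2 ^ (1 - α)) := by
        rw [Real.div_rpow ha1.le hb1.le, Real.div_rpow ha2.le hb2.le,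
          Real.rpow_sub hb1, Real.rpow_sub hb2, Real.rpow_one, Real.rpow_one]
        field_simp

/-- **Joint convexity of the classical spectral-point functionals.**
Let `X, Y` be compact Hausdorff spaces, `x ∈ X`, `α ≥ 1`, and `γ` a Radon probability
measure on `Y`.  The function `f(p,q) = p(x)^α · exp((1−α) ∫_Y ln q dγ)`, which equals
`exp(∫_X ln p dμ − ∫_Y ln q dν)` for `μ = α·δ_x` and `ν = (α−1)·γ`, is jointly convex
on pairs of strictly positive continuous functions. -/
theorem classical_spectral_point_jointly_convex
    {X Y : Type*} [TopologicalSpace X] [CompactSpace X] [T2Space X]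
    [TopologicalSpace Y] [CompactSpace Y] [T2Space Y]
    [MeasurableSpace X] [BorelSpace X] [MeasurableSpace Y] [BorelSpace Y]
    (γ : Measure Y) [IsProbabilityMeasure γ] [γ.Regular]
    (α : ℝ) (hα : 1 ≤ α) (x : X) :
    (∀ p : X → ℝ, ∀ q : Y → ℝ, Continuous p → Continuous q →
      (∀ x', 0 < p x') → (∀ y, 0 < q y) →
      p x ^ α * Real.exp ((1 - α) * ∫ y, Real.log (q y) ∂γ)
        = Real.exp ((∫ x', Real.log (p x') ∂((ENNReal.ofReal α) • Measure.dirac x))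
            - ∫ y, Real.log (q y) ∂((ENNReal.ofReal (α - 1)) • γ))) ∧
    (∀ lam : ℝ, 0 ≤ lam → lam ≤ 1 →
      ∀ p p' : X → ℝ, ∀ q q' : Y → ℝ,
      Continuous p → Continuous p' → Continuous q → Continuous q' →
      (∀ x', 0 < p x') → (∀ x', 0 < p' x') → (∀ y, 0 < q y) → (∀ y, 0 < q' y) →
      (lam * p x + (1 - lam) * p' x) ^ α
          * Real.exp ((1 - α) * ∫ y, Real.log (lam * q y + (1 - lam) * q' y) ∂γ)
        ≤ lam * (p x ^ α * Real.exp ((1 - α) * ∫ y, Real.log (q y) ∂γ))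
          + (1 - lam) * (p' x ^ α * Real.exp ((1 - α) * ∫ y, Real.log (q' y) ∂γ))) := by
  constructor
  · intro p q hp hq hpp hqp
    rw [integral_smul_measure, integral_smul_measure, integral_dirac,
      ENNReal.toReal_ofReal (by linarith : (0:ℝ) ≤ α),
      ENNReal.toReal_ofReal (by linarith : (0:ℝ) ≤ α - 1),
      smul_eq_mul, smul_eq_mul, Real.rpow_def_of_pos (hpp x), ← Real.exp_add]
    congr 1; ring
  · intro lam hl0 hl1 p p' q q' hp hp' hq hq' hpp hp'p hqp hq'p
    have rw1 : ∀ t : ℝ, Real.exp ((1 - α) * t) = Real.exp t ^ (1 - α) := fun t => by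
      rw [mul_comm, Real.exp_mul]
    rw [rw1, rw1, rw1]
    have hGm := geom_concave γ hl0 hl1 hq hq' hqp hq'p
    have hGpos : 0 < lam * Real.exp (∫ y, Real.log (q y) ∂γ)
        + (1 - lam) * Real.exp (∫ y, Real.log (q' y) ∂γ) :=
      convex_comb_pos hl0 hl1 (Real.exp_pos _) (Real.exp_pos _)
    calc (lam * p x + (1 - lam) * p' x) ^ α
          * Real.exp (∫ y, Real.log (lam * q y + (1 - lam) * q' y) ∂γ) ^ (1 - α)
        ≤ (lam * p x + (1 - lam) * p' x) ^ α
          * (lam * Real.exp (∫ y, Real.log (q y) ∂γ)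
            + (1 - lam) * Real.exp (∫ y, Real.log (q' y) ∂γ)) ^ (1 - α) :=
          mul_le_mul_of_nonneg_left
            (Real.rpow_le_rpow_of_nonpos hGpos hGm (by linarith))
            (Real.rpow_nonneg (convex_comb_pos hl0 hl1 (hpp x) (hp'p x)).le _)
      _ ≤ lam * (p x ^ α * Real.exp (∫ y, Real.log (q y) ∂γ) ^ (1 - α))
          + (1 - lam) * (p' x ^ α * Real.exp (∫ y, Real.log (q' y) ∂γ) ^ (1 - α)) :=
          rpow_joint hα hl0 hl1 (hpp x) (hp'p x) (Real.exp_pos _) (Real.exp_pos _)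
end

section
/- If f is monotone under relative submajorization of pairs of families and f(c·ρ, σ) = f(ρ,σ) whenever c ∈ C(X,ℝ_{>0}) satisfies c(x)=1 for a fixed x (as holds for spectrum elements), then f(ρ,σ) depends on ρ only through ρ(x): for any ρ, ρ' : X → PD(H) with ρ(x) = ρ'(x), f(ρ,σ) = f(ρ',σ). -/
open Matrix Kronecker ComplexOrder

variable {n m : Type*}

-- identity map is CP and TNI
lemma id_isCP [Fintype n] [DecidableEq n] : IsCP (LinearMap.id : Matrix n n ℂ →ₗ[ℂ] Matrix n n ℂ) := by
  intro k A hA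
  have : blockMap LinearMap.id k A = A := by
    ext p q
    simp [blockMap]
  rw [this]; exact hA

lemma id_isTNI [Fintype n] [DecidableEq n] : IsTNI (LinearMap.id : Matrix n n ℂ →ₗ[ℂ] Matrix n n ℂ) := by
  intro A _; simp

-- key auxiliary inequality
set_option maxHeartbeats 1000000 in
lemma aux_le
    {X Y : Type*} [TopologicalSpace X] [TopologicalSpace Y]
    [CompactSpace X] [CompactSpace Y] [Nonempty X] [Nonempty Y] [T2Space X] [T2Space Y]
    [Fintype n] [DecidableEq n]
    (f : (X → Matrix n n ℂ) → (Y → Matrix n n ℂ) → ℝ) (x : X)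
    (hmono : ∀ ρ ρ' : X → Matrix n n ℂ, ∀ σ σ' : Y → Matrix n n ℂ,
      Continuous ρ → Continuous ρ' → Continuous σ → Continuous σ' →
      (∀ x', (ρ x').PosDef) → (∀ x', (ρ' x').PosDef) →
      (∀ y, (σ y).PosDef) → (∀ y, (σ' y).PosDef) →
      (∃ T : Matrix n n ℂ →ₗ[ℂ] Matrix n n ℂ, IsCP T ∧ IsTNI T ∧
        (∀ x', loewner (ρ' x') (T (ρ x'))) ∧ (∀ y, loewner (T (σ y)) (σ' y))) →
      f ρ' σ' ≤ f ρ σ)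
    (hscale : ∀ c : X → ℝ, Continuous c → (∀ x', 0 < c x') → c x = 1 →
      ∀ ρ : X → Matrix n n ℂ, ∀ σ : Y → Matrix n n ℂ,
      Continuous ρ → Continuous σ → (∀ x', (ρ x').PosDef) → (∀ y, (σ y).PosDef) →
      f (fun x' => (c x' : ℂ) • ρ x') σ = f ρ σ)
    (ρ ρ' : X → Matrix n n ℂ) (σ : Y → Matrix n n ℂ)
    (hρc : Continuous ρ) (hρ'c : Continuous ρ') (hσc : Continuous σ)
    (hρ : ∀ x', (ρ x').PosDef) (hρ' : ∀ x', (ρ' x').PosDef) (hσ : ∀ y, (σ y).PosDef)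
    (hpt : ρ x = ρ' x) :
    f ρ' σ ≤ f ρ σ := by
  rcases isEmpty_or_nonempty n with hn | hn
  · have : ρ = ρ' := funext fun x' => Subsingleton.elim _ _
    rw [this]
  -- sphere in n → ℂ
  set S : Set (n → ℂ) := Metric.sphere 0 1 with hS
  have hvne : ∀ v : S, (v : n → ℂ) ≠ 0 := by
    intro v
    have hv1 : ‖(v : n → ℂ)‖ = 1 := mem_sphere_zero_iff_norm.mp v.2
    intro h; rw [h] at hv1; simp at hv1
  -- positivity facts
  have hq : ∀ (M : Matrix n n ℂ), M.PosDef → ∀ v : n → ℂ, v ≠ 0 →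
      0 < (star v ⬝ᵥ M *ᵥ v).re ∧ (star v ⬝ᵥ M *ᵥ v).im = 0 := by
    intro M hM v hv
    have := hM.dotProduct_mulVec_pos hv
    rw [Complex.lt_def] at this
    simpa using ⟨this.1, this.2.symm⟩
  -- the ratio function on the sphere
  set F : X → S → ℝ := fun x' v =>
    (star (v : n → ℂ) ⬝ᵥ ρ' x' *ᵥ (v : n → ℂ)).re /
    (star (v : n → ℂ) ⬝ᵥ ρ x' *ᵥ (v : n → ℂ)).re with hF
  have hFcont : Continuous (Function.uncurry F) := by
    have hcv : Continuous fun p : X × S => (p.2 : n → ℂ) :=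
      continuous_subtype_val.comp continuous_snd
    have h1 : Continuous fun p : X × S =>
        (star (p.2 : n → ℂ) ⬝ᵥ ρ' p.1 *ᵥ (p.2 : n → ℂ)) :=
      (hcv.star).dotProduct ((hρ'c.comp continuous_fst).matrix_mulVec hcv)
    have h2 : Continuous fun p : X × S =>
        (star (p.2 : n → ℂ) ⬝ᵥ ρ p.1 *ᵥ (p.2 : n → ℂ)) :=
      (hcv.star).dotProduct ((hρc.comp continuous_fst).matrix_mulVec hcv)
    exact (Complex.continuous_re.comp h1).div (Complex.continuous_re.comp h2)
      (fun p => (hq _ (hρ p.1) _ (hvne p.2)).1.ne')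
  set c : X → ℝ := fun x' => sSup (F x' '' Set.univ) with hc
  have hccont : Continuous c := isCompact_univ.continuous_sSup hFcont
  have hFx'cont : ∀ x', Continuous (F x') := fun x' =>
    hFcont.comp (Continuous.prodMk_right x')
  obtain ⟨v₀, hv₀⟩ := (NormedSpace.sphere_nonempty (E := n → ℂ) (x := 0) (r := 1)).mpr zero_le_one
  haveI : Nonempty S := ⟨⟨v₀, hv₀⟩⟩
  have hub : ∀ x' (v : S), F x' v ≤ c x' := by
    intro x' v
    exact le_csSup ((isCompact_univ.image (hFx'cont x')).bddAbove)
      ⟨v, Set.mem_univ v, rfl⟩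
  have hcpos : ∀ x', 0 < c x' := by
    intro x'
    refine lt_of_lt_of_le ?_ (hub x' ⟨v₀, hv₀⟩)
    exact div_pos (hq _ (hρ' x') _ (hvne ⟨v₀, hv₀⟩)).1 (hq _ (hρ x') _ (hvne ⟨v₀, hv₀⟩)).1
  have hcx : c x = 1 := by
    have hFx : F x = fun _ => (1 : ℝ) := by
      funext v
      simp only [hF, hpt]
      exact div_self (hq _ (hρ' x) _ (hvne v)).1.ne'
    have : c x = sSup (Set.range (F x)) := by rw [hc]; simp [Set.image_univ]
    rw [this, hFx, Set.range_const, csSup_singleton]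
  -- quadratic form inequality on the sphere
  have hsph : ∀ x' (v : S), (star (v : n → ℂ) ⬝ᵥ ρ' x' *ᵥ (v : n → ℂ)).re ≤
      c x' * (star (v : n → ℂ) ⬝ᵥ ρ x' *ᵥ (v : n → ℂ)).re := by
    intro x' v
    have := hub x' v
    rw [hF] at this
    exact (div_le_iff₀ (hq _ (hρ x') _ (hvne v)).1).mp this
  -- quadratic form inequality for all vectors
  have key : ∀ x' (v : n → ℂ), 0 ≤ star v ⬝ᵥ ((c x' : ℂ) • ρ x' - ρ' x') *ᵥ v := by
    intro x' v
    by_cases hv : v = 0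
    · simp [hv]
    · set a : ℝ := ‖v‖ with ha
      have hapos : 0 < a := norm_pos_iff.mpr hv
      set w : n → ℂ := (a⁻¹ : ℝ) • v with hw
      have hwS : w ∈ S := by
        simp only [hS, Metric.mem_sphere, dist_zero_right, hw, norm_smul]
        rw [norm_inv, Real.norm_eq_abs, abs_of_pos hapos]
        field_simp
        exact ha.symm
      have hva : v = (a : ℂ) • w := by
        funext i
        simp only [hw, Pi.smul_apply, Complex.real_smul, smul_eq_mul]
        rw [← mul_assoc, ← Complex.ofReal_mul, mul_inv_cancel₀ hapos.ne']
        simp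
      have expand : ∀ M : Matrix n n ℂ,
          star v ⬝ᵥ M *ᵥ v = (a : ℂ) * ((a : ℂ) * (star w ⬝ᵥ M *ᵥ w)) := by
        intro M
        rw [hva]
        rw [star_smul, smul_dotProduct, Matrix.mulVec_smul, dotProduct_smul]
        simp [smul_eq_mul, Complex.star_def, Complex.conj_ofReal]
      rw [expand]
      apply mul_nonneg (by exact_mod_cast Complex.zero_le_real.mpr hapos.le)
      apply mul_nonneg (by exact_mod_cast Complex.zero_le_real.mpr hapos.le)
      -- the quadratic form of c•ρ - ρ' at w is nonneg
      have hqρ := hq _ (hρ x') w (hvne ⟨w, hwS⟩)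
      have hqρ' := hq _ (hρ' x') w (hvne ⟨w, hwS⟩)
      have hval : star w ⬝ᵥ ((c x' : ℂ) • ρ x' - ρ' x') *ᵥ w =
          (c x' : ℂ) * (star w ⬝ᵥ ρ x' *ᵥ w) - star w ⬝ᵥ ρ' x' *ᵥ w := by
        rw [Matrix.sub_mulVec, dotProduct_sub, smul_mulVec, dotProduct_smul,
          smul_eq_mul]
      rw [hval, Complex.le_def]
      constructor
      · simp only [Complex.sub_re, Complex.mul_re, Complex.ofReal_re, Complex.ofReal_im,
          Complex.zero_re, hqρ.2, hqρ'.2]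
        have := hsph x' ⟨w, hwS⟩
        simp only at this
        linarith
      · simp [Complex.mul_im, hqρ.2, hqρ'.2]
  -- Hermitian facts
  have hherm : ∀ x', ((c x' : ℂ) • ρ x').IsHermitian := by
    intro x'
    have := (hρ x').1
    rw [Matrix.IsHermitian] at this ⊢
    rw [conjTranspose_smul, this, Complex.star_def, Complex.conj_ofReal]
  -- the scaled family
  set ρc : X → Matrix n n ℂ := fun x' => (c x' : ℂ) • ρ x' with hρcdef
  have hρccont : Continuous ρc :=
    (Complex.continuous_ofReal.comp hccont).smul hρc
  have hρcpos : ∀ x', (ρc x').PosDef := by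
    intro x'
    refine Matrix.PosDef.of_dotProduct_mulVec_pos (hherm x') fun ⦃v⦄ hv => ?_
    have : star v ⬝ᵥ ρc x' *ᵥ v = (c x' : ℂ) * (star v ⬝ᵥ ρ x' *ᵥ v) := by
      rw [hρcdef]; rw [smul_mulVec, dotProduct_smul, smul_eq_mul]
    rw [this]
    exact mul_pos (by exact_mod_cast Complex.zero_lt_real.mpr (hcpos x')) ((hρ x').dotProduct_mulVec_pos hv)
  have h1 : f ρ' σ ≤ f ρc σ := by
    apply hmono ρc ρ' σ σ hρccont hρ'c hσc hσc hρcpos hρ' hσ hσ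
    refine ⟨LinearMap.id, id_isCP, id_isTNI, fun x' => Matrix.PosSemidef.of_dotProduct_mulVec_nonneg ?_ (key x'), fun y => ?_⟩
    · exact (hherm x').sub (hρ' x').1
    · simp only [LinearMap.id_coe, id_eq, loewner, sub_self]
      exact Matrix.PosSemidef.zero
  have h2 : f ρc σ = f ρ σ := hscale c hccont hcpos hcx ρ σ hρc hσc hρ hσ
  exact h1.trans h2.le

/-- **Single-point dependence of spectrum elements.**
Let `f` be a function of pairs of continuous families of positive definite matrices over
compact Hausdorff `X, Y` that is monotone under relative submajorization and invariant
under multiplying the first family by a positive continuous scalar function `c` with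
`c(x) = 1` (as holds for the elements of the spectrum restricted to classical pairs).
Then `f(ρ,σ)` depends on `ρ` only through the single value `ρ(x)`: whenever
`ρ(x) = ρ'(x)`, one has `f(ρ,σ) = f(ρ',σ)`. -/
theorem spectrum_element_single_point_dependence
    {X Y : Type*} [TopologicalSpace X] [TopologicalSpace Y]
    [CompactSpace X] [CompactSpace Y] [Nonempty X] [Nonempty Y] [T2Space X] [T2Space Y]
    [Fintype n] [DecidableEq n]
    (f : (X → Matrix n n ℂ) → (Y → Matrix n n ℂ) → ℝ) (x : X)
    (hmono : ∀ ρ ρ' : X → Matrix n n ℂ, ∀ σ σ' : Y → Matrix n n ℂ,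
      Continuous ρ → Continuous ρ' → Continuous σ → Continuous σ' →
      (∀ x', (ρ x').PosDef) → (∀ x', (ρ' x').PosDef) →
      (∀ y, (σ y).PosDef) → (∀ y, (σ' y).PosDef) →
      (∃ T : Matrix n n ℂ →ₗ[ℂ] Matrix n n ℂ, IsCP T ∧ IsTNI T ∧
        (∀ x', loewner (ρ' x') (T (ρ x'))) ∧ (∀ y, loewner (T (σ y)) (σ' y))) →
      f ρ' σ' ≤ f ρ σ)
    (hscale : ∀ c : X → ℝ, Continuous c → (∀ x', 0 < c x') → c x = 1 →
      ∀ ρ : X → Matrix n n ℂ, ∀ σ : Y → Matrix n n ℂ,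
      Continuous ρ → Continuous σ → (∀ x', (ρ x').PosDef) → (∀ y, (σ y).PosDef) →
      f (fun x' => (c x' : ℂ) • ρ x') σ = f ρ σ)
    (ρ ρ' : X → Matrix n n ℂ) (σ : Y → Matrix n n ℂ)
    (hρc : Continuous ρ) (hρ'c : Continuous ρ') (hσc : Continuous σ)
    (hρ : ∀ x', (ρ x').PosDef) (hρ' : ∀ x', (ρ' x').PosDef) (hσ : ∀ y, (σ y).PosDef)
    (hpt : ρ x = ρ' x) :
    f ρ σ = f ρ' σ :=
  le_antisymm
    (aux_le f x hmono hscale ρ' ρ σ hρ'c hρc hσc hρ' hρ hσ hpt.symm)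
    (aux_le f x hmono hscale ρ ρ' σ hρc hρ'c hσc hρ hρ' hσ hpt)
end

section
/- On scalars (H = ℂ), every family of continuous geometric means M ∈ GMeans(Y) has the form M(σ) = exp(∫_Y ln σ dγ) for a unique Radon probability measure γ on Y. -/
open MeasureTheory

open Set ENNReal NNReal

section RMK

variable {Y : Type*} [TopologicalSpace Y]

/-- Test functions for the Riesz content of a set `K`. -/
def gmS (K : Set Y) : Set (Y → ℝ) :=
  {f | Continuous f ∧ (∀ y, 0 ≤ f y) ∧ ∀ y ∈ K, 1 ≤ f y}

lemma one_mem_gmS (K : Set Y) : (fun _ => (1:ℝ)) ∈ gmS K :=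
  ⟨continuous_const, fun _ => zero_le_one, fun _ _ => le_refl 1⟩

variable (Λ : (Y → ℝ) → ℝ)

/-- The Riesz content of a set. -/
noncomputable def gmrc (K : Set Y) : ℝ := sInf (Λ '' gmS K)

variable (hmono : ∀ f g : Y → ℝ, Continuous f → Continuous g →
    (∀ y, f y ≤ g y) → Λ f ≤ Λ g)
  (hzero : Λ (fun _ => 0) = 0)

section basic
include hmono hzero

lemma gm_nonneg {f : Y → ℝ} (hf : Continuous f) (h0 : ∀ y, 0 ≤ f y) : 0 ≤ Λ f := by
  rw [← hzero]; exact hmono _ _ continuous_const hf h0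

lemma gm_bddBelow (K : Set Y) : BddBelow (Λ '' gmS K) := by
  refine ⟨0, ?_⟩
  rintro x ⟨f, ⟨hf, h0, _⟩, rfl⟩
  exact gm_nonneg Λ hmono hzero hf h0

lemma gmrc_le {K : Set Y} {f : Y → ℝ} (hf : f ∈ gmS K) : gmrc Λ K ≤ Λ f :=
  csInf_le (gm_bddBelow Λ hmono hzero K) ⟨f, hf, rfl⟩

lemma le_gmrc {K : Set Y} {c : ℝ} (h : ∀ f ∈ gmS K, c ≤ Λ f) : c ≤ gmrc Λ K :=
  le_csInf ⟨Λ (fun _ => 1), (fun _ => (1:ℝ)), one_mem_gmS K, rfl⟩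
    (by rintro x ⟨f, hf, rfl⟩; exact h f hf)

lemma gmrc_nonneg (K : Set Y) : 0 ≤ gmrc Λ K :=
  le_gmrc Λ hmono hzero fun f hf => gm_nonneg Λ hmono hzero hf.1 hf.2.1

lemma gmrc_mono {K₁ K₂ : Set Y} (h : K₁ ⊆ K₂) : gmrc Λ K₁ ≤ gmrc Λ K₂ :=
  le_gmrc Λ hmono hzero fun f hf =>
    gmrc_le Λ hmono hzero ⟨hf.1, hf.2.1, fun y hy => hf.2.2 y (h hy)⟩

lemma gmrc_exists {K : Set Y} {ε : ℝ} (hε : 0 < ε) :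
    ∃ f ∈ gmS K, Λ f < gmrc Λ K + ε := by
  obtain ⟨x, hx, hlt⟩ := exists_lt_of_csInf_lt
    (Set.Nonempty.image _ ⟨_, one_mem_gmS K⟩) (lt_add_of_pos_right (gmrc Λ K) hε)
  obtain ⟨f, hf, rfl⟩ := hx
  exact ⟨f, hf, hlt⟩

end basic

end RMK

section Content2

set_option linter.unusedSectionVars false

variable {Y : Type*} [TopologicalSpace Y] [CompactSpace Y] [T2Space Y]
variable (Λ : (Y → ℝ) → ℝ)
variable (hadd : ∀ f g : Y → ℝ, Continuous f → Continuous g →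
    Λ (fun y => f y + g y) = Λ f + Λ g)
  (hmono : ∀ f g : Y → ℝ, Continuous f → Continuous g →
    (∀ y, f y ≤ g y) → Λ f ≤ Λ g)
  (hzero : Λ (fun _ => 0) = 0)

include hadd hmono hzero

lemma gmrc_union_le (K₁ K₂ : Set Y) :
    gmrc Λ (K₁ ∪ K₂) ≤ gmrc Λ K₁ + gmrc Λ K₂ := by
  rw [← sub_le_iff_le_add']
  refine le_gmrc Λ hmono hzero fun f₂ hf₂ => ?_
  rw [sub_le_iff_le_add, ← sub_le_iff_le_add']
  refine le_gmrc Λ hmono hzero fun f₁ hf₁ => ?_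
  rw [sub_le_iff_le_add]
  have hmem : (fun y => f₁ y + f₂ y) ∈ gmS (K₁ ∪ K₂) := by
    refine ⟨hf₁.1.add hf₂.1, fun y => add_nonneg (hf₁.2.1 y) (hf₂.2.1 y), ?_⟩
    rintro y (hy | hy)
    · exact le_add_of_le_of_nonneg (hf₁.2.2 y hy) (hf₂.2.1 y)
    · exact le_add_of_nonneg_of_le (hf₁.2.1 y) (hf₂.2.2 y hy)
  calc gmrc Λ (K₁ ∪ K₂) ≤ Λ (fun y => f₁ y + f₂ y) := gmrc_le Λ hmono hzero hmem
    _ = Λ f₁ + Λ f₂ := hadd _ _ hf₁.1 hf₂.1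

lemma le_gmrc_union {K₁ K₂ : Set Y} (hK₁ : IsClosed K₁) (hK₂ : IsClosed K₂)
    (hd : Disjoint K₁ K₂) :
    gmrc Λ K₁ + gmrc Λ K₂ ≤ gmrc Λ (K₁ ∪ K₂) := by
  refine le_gmrc Λ hmono hzero fun f hf => ?_
  obtain ⟨g, hg0, hg1, hg01⟩ := exists_continuous_zero_one_of_isClosed hK₂ hK₁ hd.symm
  have hgc : Continuous g := g.continuous
  have h1 : (fun y => f y * g y) ∈ gmS K₁ := by
    refine ⟨hf.1.mul hgc, fun y => mul_nonneg (hf.2.1 y) (hg01 y).1, fun y hy => ?_⟩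
    have := hg1 hy
    simp only [Pi.one_apply] at this
    simp only []
    rw [this, mul_one]; exact hf.2.2 y (Or.inl hy)
  have h2 : (fun y => f y * (1 - g y)) ∈ gmS K₂ := by
    refine ⟨hf.1.mul (continuous_const.sub hgc),
      fun y => mul_nonneg (hf.2.1 y) (by linarith [(hg01 y).2]), fun y hy => ?_⟩
    have := hg0 hy
    simp only [Pi.zero_apply] at this
    simp only []
    rw [this]; simpa using hf.2.2 y (Or.inr hy)
  calc gmrc Λ K₁ + gmrc Λ K₂ ≤ Λ (fun y => f y * g y) + Λ (fun y => f y * (1 - g y)) :=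
        add_le_add (gmrc_le Λ hmono hzero h1) (gmrc_le Λ hmono hzero h2)
    _ = Λ (fun y => f y * g y + f y * (1 - g y)) :=
        (hadd _ _ (hf.1.mul hgc) (hf.1.mul (continuous_const.sub hgc))).symm
    _ = Λ f := by congr 1; funext y; ring

/-- The Riesz content associated to a positive linear functional. -/
noncomputable def gmContent : Content Y where
  toFun K := (gmrc Λ K).toNNReal
  mono' K₁ K₂ h := Real.toNNReal_mono (gmrc_mono Λ hmono hzero h)
  sup_disjoint' K₁ K₂ hd h₁ h₂ := by
    apply le_antisymm
    · rw [← Real.toNNReal_add (gmrc_nonneg Λ hmono hzero _) (gmrc_nonneg Λ hmono hzero _)]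
      exact Real.toNNReal_mono (gmrc_union_le Λ hadd hmono hzero K₁ K₂)
    · rw [← Real.toNNReal_add (gmrc_nonneg Λ hmono hzero _) (gmrc_nonneg Λ hmono hzero _)]
      exact Real.toNNReal_mono (le_gmrc_union Λ hadd hmono hzero h₁ h₂ hd)
  sup_le' K₁ K₂ := by
    rw [← Real.toNNReal_add (gmrc_nonneg Λ hmono hzero _) (gmrc_nonneg Λ hmono hzero _)]
    exact Real.toNNReal_mono (gmrc_union_le Λ hadd hmono hzero K₁ K₂)

end Content2

section Content3

set_option linter.unusedSectionVars false

variable {Y : Type*} [TopologicalSpace Y] [CompactSpace Y] [T2Space Y]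
  [MeasurableSpace Y] [BorelSpace Y]
variable (Λ : (Y → ℝ) → ℝ)
variable (hadd : ∀ f g : Y → ℝ, Continuous f → Continuous g →
    Λ (fun y => f y + g y) = Λ f + Λ g)
  (hsm : ∀ (c : ℝ) (f : Y → ℝ), Continuous f → Λ (fun y => c * f y) = c * Λ f)
  (hmono : ∀ f g : Y → ℝ, Continuous f → Continuous g →
    (∀ y, f y ≤ g y) → Λ f ≤ Λ g)
  (hzero : Λ (fun _ => 0) = 0)

include hadd hsm hmono hzero

lemma gmContent_regular : (gmContent Λ hadd hmono hzero).ContentRegular := by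
  intro K
  refine le_antisymm (le_iInf fun K' => le_iInf fun hKK' => ?_) ?_
  · exact ENNReal.coe_le_coe.mpr <| Real.toNNReal_mono <|
      gmrc_mono Λ hmono hzero (hKK'.trans interior_subset)
  · refine ENNReal.le_of_forall_pos_le_add fun ε hε _ => ?_
    have hrc := gmrc_nonneg Λ hmono hzero (K : Set Y)
    set r : ℝ := gmrc Λ (K : Set Y) + ε with hr
    have hrpos : gmrc Λ (K : Set Y) < r := lt_add_of_pos_right _ (by exact_mod_cast hε)
    obtain ⟨f, hf, hflt⟩ := gmrc_exists Λ hmono hzero (K := (K : Set Y))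
      (ε := (r - gmrc Λ (K : Set Y)) / 2) (by simpa using sub_pos.mpr hrpos)
    have hΛf : Λ f < r := by
      have : gmrc Λ (K : Set Y) + (r - gmrc Λ (K : Set Y)) / 2 < r := by linarith
      exact hflt.trans this
    have hΛfnn : 0 ≤ Λ f := gm_nonneg Λ hmono hzero hf.1 hf.2.1
    have hrpos' : 0 < r := lt_of_le_of_lt hΛfnn hΛf
    set δ : ℝ := (r - Λ f) / (2 * r) with hδ
    have hδpos : 0 < δ := div_pos (by linarith) (by linarith)
    have hδlt : δ < 1 := by
      rw [hδ, div_lt_one (by linarith)]; linarith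
    -- the enlarged compact set
    set K' : Set Y := {y | 1 - δ ≤ f y} with hK'
    have hK'closed : IsClosed K' := isClosed_le continuous_const hf.1
    have hK'cpt : IsCompact K' := hK'closed.isCompact
    have hopen : IsOpen {y : Y | 1 - δ < f y} := isOpen_lt continuous_const hf.1
    have hKint : (K : Set Y) ⊆ interior K' := by
      intro y hy
      have h1 : (1:ℝ) - δ < f y := lt_of_lt_of_le (by linarith) (hf.2.2 y hy)
      have hsub : {y : Y | 1 - δ < f y} ⊆ interior K' :=
        interior_maximal (fun z hz => show (1:ℝ) - δ ≤ f z from le_of_lt hz) hopen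
      exact hsub h1
    have hmem : (fun y => (1 - δ)⁻¹ * f y) ∈ gmS K' := by
      refine ⟨continuous_const.mul hf.1, fun y =>
        mul_nonneg (inv_nonneg.mpr (by linarith)) (hf.2.1 y), fun y hy => ?_⟩
      have h1δ : (0:ℝ) < 1 - δ := by linarith
      have hy' : (1:ℝ) - δ ≤ f y := hy
      show (1:ℝ) ≤ (1 - δ)⁻¹ * f y
      calc (1:ℝ) = (1 - δ)⁻¹ * (1 - δ) := by field_simp
        _ ≤ (1 - δ)⁻¹ * f y := mul_le_mul_of_nonneg_left hy' (inv_nonneg.mpr h1δ.le)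
    have hrc' : gmrc Λ K' ≤ (1 - δ)⁻¹ * Λ f := by
      calc gmrc Λ K' ≤ Λ (fun y => (1 - δ)⁻¹ * f y) := gmrc_le Λ hmono hzero hmem
        _ = (1 - δ)⁻¹ * Λ f := hsm _ _ hf.1
    have hfinal : gmrc Λ K' ≤ r := by
      refine hrc'.trans ?_
      rw [inv_mul_le_iff₀ (by linarith)]
      have : δ * r = (r - Λ f) / 2 := by
        rw [hδ]; field_simp
      nlinarith
    refine iInf_le_of_le ⟨K', hK'cpt⟩ (le_trans (iInf_le_of_le hKint (le_refl _)) ?_)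
    show ((gmrc Λ K').toNNReal : ℝ≥0∞) ≤ ((gmrc Λ (K : Set Y)).toNNReal : ℝ≥0∞) + ε
    rw [← ENNReal.coe_add]
    refine ENNReal.coe_le_coe.mpr ?_
    have : ((gmrc Λ (K : Set Y)).toNNReal + ε : NNReal) = (r.toNNReal : NNReal) := by
      rw [hr, Real.toNNReal_add hrc ε.coe_nonneg, Real.toNNReal_coe]
    rw [this]
    exact Real.toNNReal_mono hfinal

end Content3

lemma sum_clamp (n : ℕ) : ∀ t : ℝ, 0 ≤ t → t ≤ n →
    ∑ i ∈ Finset.range n, min (max (t - i) 0) 1 = t := by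
  induction n with
  | zero => intro t h0 h1; simp at h1 ⊢; linarith
  | succ n ih =>
    intro t h0 h1
    rw [Finset.sum_range_succ]
    by_cases h : t ≤ n
    · rw [ih t h0 h]
      have : max (t - n) 0 = 0 := max_eq_right (by linarith)
      rw [this]
      simp
    · push_neg at h
      have hterm : ∀ i ∈ Finset.range n, min (max (t - i) 0) 1 = 1 := by
        intro i hi
        have hi' : (i:ℝ) ≤ (n:ℝ) - 1 := by
          have : (i:ℕ) < n := Finset.mem_range.mp hi
          have : (i:ℝ) + 1 ≤ n := by exact_mod_cast Nat.succ_le_of_lt this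
          linarith
        have h1' : (1:ℝ) ≤ t - i := by linarith
        have : max (t - i) 0 = t - i := max_eq_left (by linarith)
        rw [this]; exact min_eq_right h1'
      rw [Finset.sum_congr rfl hterm]
      have h2 : max (t - n) 0 = t - n := max_eq_left (by linarith)
      have h3 : min (t - n) 1 = t - n := min_eq_left (by push_cast at h1 ⊢; linarith)
      rw [h2, h3]
      simp only [Finset.sum_const, Finset.card_range, nsmul_eq_mul, mul_one]
      ring

section SumAdd
set_option linter.unusedSectionVars false
variable {Y : Type*} [TopologicalSpace Y]
variable (Λ : (Y → ℝ) → ℝ)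
variable (hadd : ∀ f g : Y → ℝ, Continuous f → Continuous g →
    Λ (fun y => f y + g y) = Λ f + Λ g)
  (hzero : Λ (fun _ => 0) = 0)

include hadd hzero in
lemma gm_sum (n : ℕ) (g : ℕ → Y → ℝ) (hg : ∀ i, Continuous (g i)) :
    Λ (fun y => ∑ i ∈ Finset.range n, g i y) = ∑ i ∈ Finset.range n, Λ (g i) := by
  induction n with
  | zero => simpa using hzero
  | succ n ih =>
    have hc : Continuous (fun y => ∑ i ∈ Finset.range n, g i y) :=
      continuous_finset_sum _ fun i _ => hg i
    calc Λ (fun y => ∑ i ∈ Finset.range (n+1), g i y)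
        = Λ (fun y => (∑ i ∈ Finset.range n, g i y) + g n y) := by
          congr 1; funext y; rw [Finset.sum_range_succ]
      _ = Λ (fun y => ∑ i ∈ Finset.range n, g i y) + Λ (g n) := hadd _ _ hc (hg n)
      _ = ∑ i ∈ Finset.range (n+1), Λ (g i) := by rw [ih, Finset.sum_range_succ]

end SumAdd

section Main
set_option linter.unusedSectionVars false
set_option maxHeartbeats 1000000

variable {Y : Type*} [TopologicalSpace Y] [CompactSpace Y] [T2Space Y]
  [MeasurableSpace Y] [BorelSpace Y] [Nonempty Y]

theorem rmk_exists (Λ : (Y → ℝ) → ℝ)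
    (hadd : ∀ f g : Y → ℝ, Continuous f → Continuous g →
      Λ (fun y => f y + g y) = Λ f + Λ g)
    (hsm : ∀ (c : ℝ) (f : Y → ℝ), Continuous f → Λ (fun y => c * f y) = c * Λ f)
    (hmono : ∀ f g : Y → ℝ, Continuous f → Continuous g →
      (∀ y, f y ≤ g y) → Λ f ≤ Λ g)
    (hone : Λ (fun _ => 1) = 1) :
    ∃ γ : Measure Y, IsProbabilityMeasure γ ∧ γ.Regular ∧
      ∀ f : Y → ℝ, Continuous f → Λ f = ∫ y, f y ∂γ := by
  have hzero : Λ (fun _ => 0) = 0 := by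
    have := hsm 0 (fun _ => 1) continuous_const
    simpa using this
  set μc := gmContent Λ hadd hmono hzero with hμc
  set γ : Measure Y := μc.measure with hγ
  -- the measure of a compact set is the Riesz content
  have hcompact : ∀ (K : Set Y), IsCompact K →
      γ K = ((gmrc Λ K).toNNReal : ℝ≥0∞) := by
    intro K hK
    exact μc.measure_eq_content_of_regular
      (gmContent_regular Λ hadd hsm hmono hzero) ⟨K, hK⟩
  have hcompactR : ∀ (K : Set Y), IsCompact K → (γ K).toReal = gmrc Λ K := by
    intro K hK
    rw [hcompact K hK, ENNReal.coe_toReal, Real.coe_toNNReal _ (gmrc_nonneg Λ hmono hzero K)]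
  -- γ is a probability measure
  have hrc_univ : gmrc Λ (Set.univ : Set Y) = 1 := by
    apply le_antisymm
    · have := gmrc_le Λ hmono hzero (one_mem_gmS (Set.univ : Set Y))
      rwa [hone] at this
    · refine le_gmrc Λ hmono hzero fun f hf => ?_
      rw [← hone]
      exact hmono _ _ continuous_const hf.1 fun y => hf.2.2 y (Set.mem_univ y)
  have hprob : IsProbabilityMeasure γ := by
    constructor
    rw [hcompact Set.univ isCompact_univ, hrc_univ]
    simp
  haveI := hprob
  haveI : γ.Regular := μc.regular
  refine ⟨γ, hprob, inferInstance, ?_⟩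
  -- integrability of continuous functions
  have hint : ∀ f : Y → ℝ, Continuous f → Integrable f γ := by
    intro f hf
    exact hf.integrable_of_hasCompactSupport
      (IsCompact.of_isClosed_subset isCompact_univ (isClosed_tsupport f) (Set.subset_univ _))
  have hcmul : ∀ (c : ℝ) (u : Y → ℝ), ∫ y, c * u y ∂γ = c * ∫ y, u y ∂γ := by
    intro c u
    simpa [smul_eq_mul] using integral_smul c u (μ := γ)
  -- Step A : the identity for functions with values in [0,1]
  have stepA : ∀ f : Y → ℝ, Continuous f → (∀ y, 0 ≤ f y) → (∀ y, f y ≤ 1) →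
      Λ f = ∫ y, f y ∂γ := by
    intro f hf h0 h1
    have key : ∀ n : ℕ, 1 ≤ n → |Λ f - ∫ y, f y ∂γ| ≤ 1 / n := by
      intro n hn
      have hn' : (0:ℝ) < n := by exact_mod_cast hn
      set K : ℕ → Set Y := fun i => {y | (i:ℝ)/n ≤ f y} with hKdef
      have hKclosed : ∀ i, IsClosed (K i) := fun i => isClosed_le continuous_const hf
      have hKcpt : ∀ i, IsCompact (K i) := fun i => (hKclosed i).isCompact
      have hKmeas : ∀ i, MeasurableSet (K i) := fun i => (hKclosed i).measurableSet
      set A : ℕ → ℝ := fun i => (γ (K i)).toReal with hAdef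
      have hAeq : ∀ i, A i = gmrc Λ (K i) := fun i => hcompactR (K i) (hKcpt i)
      have hAmono : ∀ i, A (i+1) ≤ A i := by
        intro i
        apply ENNReal.toReal_mono (measure_ne_top γ _)
        apply measure_mono
        intro y hy
        simp only [hKdef, Set.mem_setOf_eq] at hy ⊢
        push_cast at hy
        exact le_trans ((div_le_div_iff_of_pos_right hn').mpr (by linarith)) hy
      have hA0 : A 0 ≤ 1 := by
        have : γ (K 0) ≤ γ Set.univ := measure_mono (Set.subset_univ _)
        have h2 : (γ (K 0)).toReal ≤ (γ Set.univ).toReal :=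
          ENNReal.toReal_mono (measure_ne_top γ _) this
        rwa [measure_univ, ENNReal.toReal_one] at h2
      have hAnn : ∀ i, 0 ≤ A i := fun i => ENNReal.toReal_nonneg
      -- the layer functions
      set g : ℕ → Y → ℝ := fun i y => min (max ((n:ℝ) * f y - i) 0) 1 with hgdef
      have hgc : ∀ i, Continuous (g i) := by
        intro i
        exact ((continuous_const.mul hf).sub continuous_const).max continuous_const
          |>.min continuous_const
      have hg0 : ∀ i y, 0 ≤ g i y := fun i y => le_min (le_max_right _ _) zero_le_one
      have hg1 : ∀ i y, g i y ≤ 1 := fun i y => min_le_right _ _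
      have hgzero : ∀ i y, y ∉ K i → g i y = 0 := by
        intro i y hy
        simp only [hKdef, Set.mem_setOf_eq, not_le] at hy
        have h' : f y * n < i := (lt_div_iff₀ hn').mp hy
        have : (n:ℝ) * f y - i ≤ 0 := by nlinarith
        simp only [hgdef]
        rw [max_eq_right this, min_eq_left zero_le_one]
      have hgone : ∀ i y, y ∈ K (i+1) → g i y = 1 := by
        intro i y hy
        simp only [hKdef, Set.mem_setOf_eq] at hy
        push_cast at hy
        rw [div_le_iff₀ hn'] at hy
        have h1 : (1:ℝ) ≤ (n:ℝ) * f y - i := by nlinarith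
        simp only [hgdef]
        rw [max_eq_left (by linarith), min_eq_right h1]
      -- Λ bounds
      have b1 : ∀ i, Λ (g i) ≤ A i := by
        intro i
        rw [hAeq i]
        refine le_gmrc Λ hmono hzero fun h hh => ?_
        refine hmono _ _ (hgc i) hh.1 fun y => ?_
        by_cases hy : y ∈ K i
        · exact le_trans (hg1 i y) (hh.2.2 y hy)
        · rw [hgzero i y hy]; exact hh.2.1 y
      have b2 : ∀ i, A (i+1) ≤ Λ (g i) := by
        intro i
        rw [hAeq (i+1)]
        exact gmrc_le Λ hmono hzero ⟨hgc i, hg0 i, fun y hy => (hgone i y hy).ge⟩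
      -- integral bounds
      have hgint : ∀ i, Integrable (g i) γ := fun i => hint _ (hgc i)
      have hindint : ∀ i, Integrable ((K i).indicator (fun _ => (1:ℝ))) γ :=
        fun i => (integrable_const (1:ℝ)).indicator (hKmeas i)
      have b3 : ∀ i, ∫ y, g i y ∂γ ≤ A i := by
        intro i
        have hle : ∀ y, g i y ≤ (K i).indicator (fun _ => (1:ℝ)) y := by
          intro y
          by_cases hy : y ∈ K i
          · rw [Set.indicator_of_mem hy]; exact hg1 i y
          · rw [Set.indicator_of_notMem hy, hgzero i y hy]
        calc ∫ y, g i y ∂γ ≤ ∫ y, (K i).indicator (fun _ => (1:ℝ)) y ∂γ :=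
              integral_mono (hgint i) (hindint i) hle
          _ = A i := by rw [integral_indicator_const (1:ℝ) (hKmeas i)]; simp [hAdef]; rfl
      have b4 : ∀ i, A (i+1) ≤ ∫ y, g i y ∂γ := by
        intro i
        have hle : ∀ y, (K (i+1)).indicator (fun _ => (1:ℝ)) y ≤ g i y := by
          intro y
          by_cases hy : y ∈ K (i+1)
          · rw [Set.indicator_of_mem hy, hgone i y hy]
          · rw [Set.indicator_of_notMem hy]; exact hg0 i y
        calc A (i+1) = ∫ y, (K (i+1)).indicator (fun _ => (1:ℝ)) y ∂γ := by
              rw [integral_indicator_const (1:ℝ) (hKmeas (i+1))]; simp [hAdef]; rfl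
          _ ≤ ∫ y, g i y ∂γ := integral_mono (hindint (i+1)) (hgint i) hle
      -- summing up
      have hsum : ∀ y, ∑ i ∈ Finset.range n, g i y = (n:ℝ) * f y := by
        intro y
        exact sum_clamp n ((n:ℝ) * f y) (mul_nonneg hn'.le (h0 y))
          (by nlinarith [h1 y])
      have e1 : (n:ℝ) * Λ f = ∑ i ∈ Finset.range n, Λ (g i) := by
        rw [← gm_sum Λ hadd hzero n g hgc, ← hsm (n:ℝ) f hf]
        congr 1
        funext y
        rw [hsum y]
      have e2 : (n:ℝ) * ∫ y, f y ∂γ = ∑ i ∈ Finset.range n, ∫ y, g i y ∂γ := by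
        rw [← integral_finset_sum _ (fun i _ => hgint i), ← hcmul (n:ℝ) f]
        congr 1
        funext y
        rw [hsum y]
      have hterm : ∀ i ∈ Finset.range n, |Λ (g i) - ∫ y, g i y ∂γ| ≤ A i - A (i+1) := by
        intro i _
        rw [abs_sub_le_iff]
        constructor
        · linarith [b1 i, b4 i]
        · linarith [b2 i, b3 i]
      have habs : |(n:ℝ) * Λ f - (n:ℝ) * ∫ y, f y ∂γ| ≤ 1 := by
        rw [e1, e2, ← Finset.sum_sub_distrib]
        calc |∑ i ∈ Finset.range n, (Λ (g i) - ∫ y, g i y ∂γ)|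
            ≤ ∑ i ∈ Finset.range n, |Λ (g i) - ∫ y, g i y ∂γ| :=
              Finset.abs_sum_le_sum_abs _ _
          _ ≤ ∑ i ∈ Finset.range n, (A i - A (i+1)) := Finset.sum_le_sum hterm
          _ = A 0 - A n := Finset.sum_range_sub' A n
          _ ≤ 1 := by linarith [hAnn n]
      rw [← mul_sub, abs_mul, abs_of_pos hn'] at habs
      rw [le_div_iff₀ hn']
      linarith
    -- conclude equality
    by_contra hne
    have hpos : 0 < |Λ f - ∫ y, f y ∂γ| := abs_pos.mpr (sub_ne_zero.mpr hne)
    obtain ⟨n, hnlt⟩ := exists_nat_one_div_lt hpos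
    have := key (n+1) (Nat.le_add_left 1 n)
    push_cast at this
    linarith
  -- Step B : the general case
  intro f hf
  obtain ⟨ymin, -, hymin⟩ := isCompact_univ.exists_isMinOn Set.univ_nonempty hf.continuousOn
  obtain ⟨ymax, -, hymax⟩ := isCompact_univ.exists_isMaxOn Set.univ_nonempty hf.continuousOn
  set m : ℝ := f ymin with hm
  set b : ℝ := f ymax with hb
  have hmb : m ≤ b := isMinOn_iff.mp hymin ymax (Set.mem_univ ymax)
  have hden : (0:ℝ) < b - m + 1 := by linarith
  set g : Y → ℝ := fun y => (f y - m) / (b - m + 1) with hgd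
  have hgc : Continuous g := (hf.sub continuous_const).div_const _
  have hg0 : ∀ y, 0 ≤ g y := by
    intro y
    apply div_nonneg _ hden.le
    linarith [isMinOn_iff.mp hymin y (Set.mem_univ y)]
  have hg1 : ∀ y, g y ≤ 1 := by
    intro y
    have : g y = (f y - m) / (b - m + 1) := rfl
    rw [this, div_le_one hden]
    linarith [isMaxOn_iff.mp hymax y (Set.mem_univ y)]
  have hfg : ∀ y, f y = (b - m + 1) * g y + m := by
    intro y
    rw [hgd]
    field_simp
    ring
  have hconst : ∀ c : ℝ, Λ (fun _ => c) = c := by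
    intro c
    have := hsm c (fun _ => 1) continuous_const
    simpa [hone] using this
  have hΛ : Λ f = (b - m + 1) * Λ g + m := by
    calc Λ f = Λ (fun y => (b - m + 1) * g y + m) := by congr 1; funext y; exact hfg y
      _ = Λ (fun y => (b - m + 1) * g y) + Λ (fun _ => m) :=
          hadd _ _ (continuous_const.mul hgc) continuous_const
      _ = (b - m + 1) * Λ g + m := by rw [hsm _ _ hgc, hconst]
  have hI : ∫ y, f y ∂γ = (b - m + 1) * (∫ y, g y ∂γ) + m := by
    calc ∫ y, f y ∂γ = ∫ y, ((b - m + 1) * g y + m) ∂γ := by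
          congr 1; funext y; exact hfg y
      _ = ∫ y, (b - m + 1) * g y ∂γ + ∫ _, m ∂γ :=
          integral_add ((hint g hgc).const_mul _) (integrable_const m)
      _ = (b - m + 1) * (∫ y, g y ∂γ) + m := by
          rw [hcmul, integral_const]
          simp
  rw [hΛ, hI, stepA g hgc hg0 hg1]

end Main

section Unique
set_option linter.unusedSectionVars false

variable {Y : Type*} [TopologicalSpace Y] [CompactSpace Y] [T2Space Y]
  [MeasurableSpace Y] [BorelSpace Y]

theorem regular_prob_ext (γ γ' : Measure Y)
    (hp : IsProbabilityMeasure γ) (hp' : IsProbabilityMeasure γ')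
    (hr : γ.Regular) (hr' : γ'.Regular)
    (h : ∀ f : Y → ℝ, Continuous f → ∫ y, f y ∂γ = ∫ y, f y ∂γ') : γ = γ' := by
  haveI := hp; haveI := hp'; haveI := hr; haveI := hr'
  have hint : ∀ (ν : Measure Y) (f : Y → ℝ), IsFiniteMeasure ν → Continuous f →
      Integrable f ν := by
    intro ν f hν hf
    haveI := hν
    exact hf.integrable_of_hasCompactSupport
      (IsCompact.of_isClosed_subset isCompact_univ (isClosed_tsupport f) (Set.subset_univ _))
  -- one-sided estimate on compact sets
  have hstep : ∀ (ν ν' : Measure Y), IsProbabilityMeasure ν → IsProbabilityMeasure ν' →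
      ν.Regular → ν'.Regular →
      (∀ f : Y → ℝ, Continuous f → ∫ y, f y ∂ν = ∫ y, f y ∂ν') →
      ∀ K : Set Y, IsCompact K → ν' K ≤ ν K := by
    intro ν ν' hpν hpν' hrν hrν' heq K hK
    haveI := hpν; haveI := hpν'; haveI := hrν; haveI := hrν'
    refine ENNReal.le_of_forall_pos_le_add fun ε hε _ => ?_
    have hlt : ν K < ν K + ε := by
      refine ENNReal.lt_add_right (measure_ne_top ν K) ?_
      exact_mod_cast hε.ne'
    obtain ⟨U, hKU, hUopen, hUlt⟩ := Set.exists_isOpen_lt_of_lt K _ hlt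
    obtain ⟨f, hf0, hf1, hf01⟩ := exists_continuous_zero_one_of_isClosed
      (isClosed_compl_iff.mpr hUopen) hK.isClosed
      (disjoint_compl_left_iff_subset.mpr hKU)
    have hfc : Continuous f := f.continuous
    have hKmeas : MeasurableSet K := hK.isClosed.measurableSet
    have hUmeas : MeasurableSet U := hUopen.measurableSet
    have h1 : (ν' K).toReal ≤ ∫ y, f y ∂ν' := by
      have hle : ∀ y, K.indicator (fun _ => (1:ℝ)) y ≤ f y := by
        intro y
        by_cases hy : y ∈ K
        · rw [Set.indicator_of_mem hy]
          have := hf1 hy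
          simp only [Pi.one_apply] at this
          rw [this]
        · rw [Set.indicator_of_notMem hy]
          exact (hf01 y).1
      have := integral_mono ((integrable_const (1:ℝ)).indicator hKmeas)
        (hint ν' f inferInstance hfc) hle
      rwa [integral_indicator_const (1:ℝ) hKmeas, smul_eq_mul, mul_one] at this
    have h2 : ∫ y, f y ∂ν ≤ (ν U).toReal := by
      have hle : ∀ y, f y ≤ U.indicator (fun _ => (1:ℝ)) y := by
        intro y
        by_cases hy : y ∈ U
        · rw [Set.indicator_of_mem hy]
          exact (hf01 y).2
        · rw [Set.indicator_of_notMem hy]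
          have := hf0 (Set.mem_compl hy)
          simp only [Pi.zero_apply] at this
          rw [this]
      have := integral_mono (hint ν f inferInstance hfc)
        ((integrable_const (1:ℝ)).indicator hUmeas) hle
      rwa [integral_indicator_const (1:ℝ) hUmeas, smul_eq_mul, mul_one] at this
    have h3 : (ν' K).toReal ≤ ((ν K + ε : ℝ≥0∞)).toReal := by
      calc (ν' K).toReal ≤ ∫ y, f y ∂ν' := h1
        _ = ∫ y, f y ∂ν := (heq f hfc).symm
        _ ≤ (ν U).toReal := h2
        _ ≤ ((ν K + ε : ℝ≥0∞)).toReal := by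
            apply ENNReal.toReal_mono _ hUlt.le
            exact ENNReal.add_ne_top.mpr ⟨measure_ne_top ν K, ENNReal.coe_ne_top⟩
    exact (ENNReal.toReal_le_toReal (measure_ne_top ν' K)
      (ENNReal.add_ne_top.mpr ⟨measure_ne_top ν K, ENNReal.coe_ne_top⟩)).mp h3
  have hKeq : ∀ K : Set Y, IsCompact K → γ K = γ' K := by
    intro K hK
    exact le_antisymm
      (hstep γ' γ hp' hp hr' hr (fun f hf => (h f hf).symm) K hK)
      (hstep γ γ' hp hp' hr hr' h K hK)
  have hUeq : ∀ U : Set Y, IsOpen U → γ U = γ' U := by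
    intro U hU
    rw [hU.measure_eq_iSup_isCompact, hU.measure_eq_iSup_isCompact]
    exact iSup_congr fun K => iSup_congr fun _ => iSup_congr fun hc => hKeq K hc
  ext s hs
  rw [measure_eq_iInf_isOpen s γ, measure_eq_iInf_isOpen s γ']
  exact iInf_congr fun U => iInf_congr fun _ => iInf_congr fun hU => hUeq U hU

end Unique


set_option maxHeartbeats 1000000 in
/-- **Classification of scalar geometric means.** Let `Y` be a nonempty compact Hausdorff
space and let `M` assign a positive real to every strictly positive continuous function on
`Y`, such that `M` is multiplicative, positively homogeneous, monotone and concave (on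
strictly positive continuous functions). Then there is a unique Radon probability measure
`γ` on `Y` with `M(σ) = exp(∫_Y ln σ dγ)` for all strictly positive continuous `σ`. -/
theorem scalar_gmeans_classification
    {Y : Type*} [TopologicalSpace Y] [CompactSpace Y] [T2Space Y] [Nonempty Y]
    [MeasurableSpace Y] [BorelSpace Y]
    (M : (Y → ℝ) → ℝ)
    (hpos : ∀ σ : Y → ℝ, Continuous σ → (∀ y, 0 < σ y) → 0 < M σ)
    (hmul : ∀ σ σ' : Y → ℝ, Continuous σ → Continuous σ' →
      (∀ y, 0 < σ y) → (∀ y, 0 < σ' y) → M (fun y => σ y * σ' y) = M σ * M σ')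
    (hsmul : ∀ (lam : ℝ), 0 < lam → ∀ σ : Y → ℝ, Continuous σ → (∀ y, 0 < σ y) →
      M (fun y => lam * σ y) = lam * M σ)
    (hmono : ∀ σ σ' : Y → ℝ, Continuous σ → Continuous σ' →
      (∀ y, 0 < σ y) → (∀ y, 0 < σ' y) → (∀ y, σ y ≤ σ' y) → M σ ≤ M σ')
    (hconc : ∀ σ σ' : Y → ℝ, Continuous σ → Continuous σ' →
      (∀ y, 0 < σ y) → (∀ y, 0 < σ' y) → ∀ lam : ℝ, 0 ≤ lam → lam ≤ 1 →
      lam * M σ + (1 - lam) * M σ' ≤ M (fun y => lam * σ y + (1 - lam) * σ' y)) :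
    ∃ γ : Measure Y, (IsProbabilityMeasure γ ∧ γ.Regular ∧
        ∀ σ : Y → ℝ, Continuous σ → (∀ y, 0 < σ y) →
          M σ = Real.exp (∫ y, Real.log (σ y) ∂γ)) ∧
      ∀ γ' : Measure Y, (IsProbabilityMeasure γ' ∧ γ'.Regular ∧
        ∀ σ : Y → ℝ, Continuous σ → (∀ y, 0 < σ y) →
          M σ = Real.exp (∫ y, Real.log (σ y) ∂γ')) → γ' = γ := by
  clear hconc
  -- the logarithmic functional
  set Λ : (Y → ℝ) → ℝ := fun ξ => Real.log (M (fun y => Real.exp (ξ y))) with hΛset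
  have hΛdef : ∀ ξ : Y → ℝ, Λ ξ = Real.log (M (fun y => Real.exp (ξ y))) := fun _ => rfl
  have hec : ∀ ξ : Y → ℝ, Continuous ξ → Continuous (fun y => Real.exp (ξ y)) :=
    fun ξ h => Real.continuous_exp.comp h
  have hep : ∀ ξ : Y → ℝ, ∀ y, (0:ℝ) < Real.exp (ξ y) := fun ξ y => Real.exp_pos _
  have hMe : ∀ ξ : Y → ℝ, Continuous ξ → 0 < M (fun y => Real.exp (ξ y)) :=
    fun ξ h => hpos _ (hec ξ h) (hep ξ)
  -- M of the constant one function
  have hM1 : M (fun _ => 1) = 1 := by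
    have h := hmul (fun _ => 1) (fun _ => 1) continuous_const continuous_const
      (fun _ => one_pos) (fun _ => one_pos)
    simp only [mul_one] at h
    have hp1 : 0 < M (fun _ => (1:ℝ)) := hpos _ continuous_const fun _ => one_pos
    have h2 : M (fun _ => (1:ℝ)) * (M (fun _ => (1:ℝ)) - 1) = 0 := by nlinarith
    rcases mul_eq_zero.mp h2 with h3 | h3
    · exact absurd h3 hp1.ne'
    · linarith
  -- additivity
  have hadd : ∀ f g : Y → ℝ, Continuous f → Continuous g →
      Λ (fun y => f y + g y) = Λ f + Λ g := by
    intro f g hf hg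
    rw [hΛdef, hΛdef, hΛdef]
    have h1 : (fun y => Real.exp (f y + g y)) =
        fun y => Real.exp (f y) * Real.exp (g y) := by
      funext y; exact Real.exp_add _ _
    rw [h1, hmul _ _ (hec f hf) (hec g hg) (hep f) (hep g),
      Real.log_mul (hMe f hf).ne' (hMe g hg).ne']
  -- monotonicity
  have hmono' : ∀ f g : Y → ℝ, Continuous f → Continuous g →
      (∀ y, f y ≤ g y) → Λ f ≤ Λ g := by
    intro f g hf hg hle
    rw [hΛdef, hΛdef]
    apply Real.log_le_log (hMe f hf)
    exact hmono _ _ (hec f hf) (hec g hg) (hep f) (hep g)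
      fun y => Real.exp_le_exp.mpr (hle y)
  -- constants
  have hzeroΛ : Λ (fun _ => 0) = 0 := by
    rw [hΛdef]
    simp [hM1]
  have haddconst : ∀ (c : ℝ) (f : Y → ℝ), Continuous f →
      Λ (fun y => f y + c) = Λ f + c := by
    intro c f hf
    rw [hΛdef, hΛdef]
    have h1 : (fun y => Real.exp (f y + c)) =
        fun y => Real.exp c * Real.exp (f y) := by
      funext y; rw [Real.exp_add]; ring
    rw [h1, hsmul _ (Real.exp_pos c) _ (hec f hf) (hep f),
      Real.log_mul (Real.exp_pos c).ne' (hMe f hf).ne', Real.log_exp]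
    ring
  have hone : Λ (fun _ => 1) = 1 := by
    have := haddconst 1 (fun _ => 0) continuous_const
    simpa [hzeroΛ] using this
  -- scalar multiplication by naturals, integers, rationals
  have hneg : ∀ f : Y → ℝ, Continuous f → Λ (fun y => - f y) = - Λ f := by
    intro f hf
    have h := hadd f (fun y => - f y) hf hf.neg
    simp only [add_neg_cancel] at h
    rw [hzeroΛ] at h
    linarith
  have hnat : ∀ (k : ℕ) (f : Y → ℝ), Continuous f →
      Λ (fun y => (k:ℝ) * f y) = k * Λ f := by
    intro k
    induction k with
    | zero => intro f hf; simp [hzeroΛ]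
    | succ k ih =>
      intro f hf
      have h1 : (fun y => ((k:ℝ)+1) * f y) = fun y => (k:ℝ) * f y + f y := by
        funext y; ring
      push_cast
      rw [h1, hadd (fun y => (k:ℝ) * f y) f (continuous_const.mul hf) hf, ih f hf]
      ring
  have hint : ∀ (k : ℤ) (f : Y → ℝ), Continuous f →
      Λ (fun y => (k:ℝ) * f y) = k * Λ f := by
    intro k f hf
    obtain ⟨n, rfl | rfl⟩ := k.eq_nat_or_neg
    · push_cast; exact hnat n f hf
    · push_cast
      have h1 : (fun y => -(n:ℝ) * f y) = fun y => - ((n:ℝ) * f y) := by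
        funext y; ring
      rw [h1, hneg (fun y => (n:ℝ) * f y) (continuous_const.mul hf), hnat n f hf]
      ring
  have hrat : ∀ (q : ℚ) (f : Y → ℝ), Continuous f →
      Λ (fun y => (q:ℝ) * f y) = q * Λ f := by
    intro q f hf
    have hden : ((q.den:ℝ)) ≠ 0 := by positivity
    have h1 : (fun y => ((q.num:ℝ)) * f y) = fun y => (q.den:ℝ) * ((q:ℝ) * f y) := by
      funext y
      rw [Rat.cast_def]
      field_simp
    have h2 := hint q.num f hf
    rw [h1, hnat q.den (fun y => (q:ℝ) * f y) (continuous_const.mul hf)] at h2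
    have h3 : Λ (fun y => (q:ℝ) * f y) = (q.num:ℝ) / (q.den:ℝ) * Λ f := by
      field_simp at h2 ⊢
      linarith
    rw [h3, Rat.cast_def]
  -- scalar multiplication by reals, for nonnegative functions
  have hsmnn : ∀ (c : ℝ) (f : Y → ℝ), Continuous f → (∀ y, 0 ≤ f y) →
      Λ (fun y => c * f y) = c * Λ f := by
    intro c f hf h0
    have hΛnn : 0 ≤ Λ f := by
      have := hmono' (fun _ => 0) f continuous_const hf h0
      rwa [hzeroΛ] at this
    have key : ∀ ε : ℝ, 0 < ε → |Λ (fun y => c * f y) - c * Λ f| ≤ ε := by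
      intro ε hε
      set δ : ℝ := ε / (2 * (Λ f + 1)) with hδ
      have hδpos : 0 < δ := by positivity
      obtain ⟨q, hq1, hq2⟩ := exists_rat_btwn (show c - δ < c by linarith)
      obtain ⟨q', hq1', hq2'⟩ := exists_rat_btwn (show c < c + δ by linarith)
      have hmlow : ∀ y, (q:ℝ) * f y ≤ c * f y :=
        fun y => mul_le_mul_of_nonneg_right hq2.le (h0 y)
      have hmhigh : ∀ y, c * f y ≤ (q':ℝ) * f y :=
        fun y => mul_le_mul_of_nonneg_right hq1'.le (h0 y)
      have l1 : (q:ℝ) * Λ f ≤ Λ (fun y => c * f y) := by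
        rw [← hrat q f hf]
        exact hmono' _ _ (continuous_const.mul hf) (continuous_const.mul hf) hmlow
      have l2 : Λ (fun y => c * f y) ≤ (q':ℝ) * Λ f := by
        rw [← hrat q' f hf]
        exact hmono' _ _ (continuous_const.mul hf) (continuous_const.mul hf) hmhigh
      have l3 : (q:ℝ) * Λ f ≤ c * Λ f := mul_le_mul_of_nonneg_right hq2.le hΛnn
      have l4 : c * Λ f ≤ (q':ℝ) * Λ f := mul_le_mul_of_nonneg_right hq1'.le hΛnn
      have hqq : ((q':ℝ) - q) * Λ f ≤ 2 * δ * Λ f := by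
        apply mul_le_mul_of_nonneg_right _ hΛnn
        linarith
      have h2δ : 2 * δ * Λ f ≤ ε := by
        have : 2 * δ * (Λ f + 1) = ε := by
          rw [hδ]; field_simp
        nlinarith
      rw [abs_sub_le_iff]
      constructor <;> nlinarith
    by_contra hne
    have hpos' : 0 < |Λ (fun y => c * f y) - c * Λ f| := abs_pos.mpr (sub_ne_zero.mpr hne)
    have := key _ (half_pos hpos')
    linarith
  -- scalar multiplication by reals, in general
  have hsm : ∀ (c : ℝ) (f : Y → ℝ), Continuous f →
      Λ (fun y => c * f y) = c * Λ f := by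
    intro c f hf
    obtain ⟨ymin, -, hymin⟩ := isCompact_univ.exists_isMinOn Set.univ_nonempty
      hf.continuousOn
    set m : ℝ := f ymin with hm
    set η : Y → ℝ := fun y => f y - m with hη
    have hηc : Continuous η := hf.sub continuous_const
    have hη0 : ∀ y, 0 ≤ η y := by
      intro y
      have := isMinOn_iff.mp hymin y (Set.mem_univ y)
      simp only [hη]
      linarith
    have hfη : Λ f = Λ η + m := by
      have h1 : (fun y => η y + m) = f := by funext y; simp [hη]
      have := haddconst m η hηc
      rw [h1] at this
      exact this
    have hcf : Λ (fun y => c * f y) = c * Λ η + c * m := by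
      have h1 : (fun y => c * f y) = fun y => (c * η y) + c * m := by
        funext y; simp [hη]; ring
      rw [h1, haddconst (c * m) (fun y => c * η y) (continuous_const.mul hηc), hsmnn c η hηc hη0]
    rw [hcf, hfη]
    ring
  -- apply the Riesz representation
  obtain ⟨γ, hγp, hγr, hγint⟩ := rmk_exists Λ hadd hsm hmono' hone
  refine ⟨γ, ⟨hγp, hγr, ?_⟩, ?_⟩
  · intro σ hσ hσpos
    have hlog : Continuous fun y => Real.log (σ y) :=
      hσ.log fun y => (hσpos y).ne'
    have h1 := hγint _ hlog
    have h2 : Λ (fun y => Real.log (σ y)) = Real.log (M σ) := by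
      rw [hΛdef]
      congr 2
      funext y
      exact Real.exp_log (hσpos y)
    rw [h2] at h1
    rw [← h1, Real.exp_log (hpos σ hσ hσpos)]
  · rintro γ' ⟨hp', hr', hrep'⟩
    apply regular_prob_ext γ' γ hp' hγp hr' hγr
    intro f hf
    have hσ : Continuous fun y => Real.exp (f y) := hec f hf
    have e1 := hrep' _ hσ (hep f)
    simp only [Real.log_exp] at e1
    have e3 : M (fun y => Real.exp (f y)) = Real.exp (Λ f) := by
      rw [hΛdef]
      exact (Real.exp_log (hMe f hf)).symm
    rw [e3] at e1
    have e4 : Λ f = ∫ y, f y ∂γ' := Real.exp_injective e1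
    rw [← e4, hγint f hf]
end
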